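/- arXiv:2406.19252 — 5 statements merged into one kernel-verified Lean document; each statement's English description precedes it below -/
import Mathlib

section
/- Let n ≥ 1 and let E ⊆ 𝔻ⁿ be a discrete set that is separated and well-approximated. Then the critical exponent satisfies δ(E) ≤ upper box dimension of L(E). -/
open Metric Set Filter
open scoped ENNReal NNReal

noncomputable section

/-- Points of `ℝⁿ` (Euclidean space). -/
abbrev Pt (n : ℕ) := EuclideanSpace ℝ (Fin n)

/-- `E` is a discrete set: every point of `E` is isolated in `E`. -/
def IsDiscreteSet {n : ℕ} (E : Set (Pt n)) : Prop :=
  ∀ x ∈ E, ∃ r > 0, closedBall x r ∩ E = {x}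

/-- The limit set `L(E) = cl(E) \ E`. -/
def limitSet {n : ℕ} (E : Set (Pt n)) : Set (Pt n) := closure E \ E

/-- `E ⊆ 𝔻ⁿ` is separated. -/
def SeparatedSet {n : ℕ} (E : Set (Pt n)) : Prop :=
  ∃ c₁ : ℝ, 0 < c₁ ∧ c₁ < 1 ∧ ∀ x ∈ E, closedBall x (c₁ * (1 - ‖x‖)) ∩ E = {x}

/-- `E ⊆ 𝔻ⁿ` is well-approximated. -/
def WellApproximated {n : ℕ} (E : Set (Pt n)) : Prop :=
  ∃ c₂ : ℝ, 1 ≤ c₂ ∧ ∀ x ∈ E, ∃ z ∈ limitSet E, dist x z ≤ c₂ * (1 - ‖x‖)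

/-- `E` is `α`-separated. -/
def AlphaSeparated {n : ℕ} (E : Set (Pt n)) (α : ℝ) : Prop :=
  ∃ c₁ : ℝ, 0 < c₁ ∧ ∀ x ∈ E, closedBall x (c₁ * (1 - ‖x‖) ^ α) ∩ E = {x}

/-- `E` is `β`-well-approximated. -/
def BetaWellApproximated {n : ℕ} (E : Set (Pt n)) (β : ℝ) : Prop :=
  ∃ c₂ : ℝ, 1 ≤ c₂ ∧ ∀ x ∈ E, ∃ z ∈ limitSet E, dist x z ≤ c₂ * (1 - ‖x‖) ^ β

/-- The accumulation series `S_E(s) = ∑_{x ∈ E} (1 - |x|)^s` (valued in `ℝ≥0∞`). -/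
def accSeries {n : ℕ} (E : Set (Pt n)) (s : ℝ) : ℝ≥0∞ :=
  ∑' x : E, ENNReal.ofReal ((1 - ‖(x : Pt n)‖) ^ s)

/-- The critical exponent `δ(E) = inf { s ≥ 0 : S_E(s) < ∞ }`, with `inf ∅ = ∞`. -/
def critExp {n : ℕ} (E : Set (Pt n)) : ℝ≥0∞ :=
  ⨅ (s : ℝ≥0) (_ : accSeries E (s : ℝ) < ⊤), (s : ℝ≥0∞)

/-- The set of `c`-radial limit points of `E`. -/
def radialPoints {n : ℕ} (E : Set (Pt n)) (c : ℝ) : Set (Pt n) :=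
  {z | ‖z‖ = 1 ∧ ∀ r > 0, ∃ x ∈ E,
    dist x z ≤ c * (1 - ‖x‖) ∧ c * (1 - ‖x‖) ≤ c * r}

/-- The radial limit set `L_rad(E) = ⋃_{c ≥ 1} L_c(E)`. -/
def radialLimitSet {n : ℕ} (E : Set (Pt n)) : Set (Pt n) :=
  ⋃ c ∈ Ici (1 : ℝ), radialPoints E c

/-- The set of `(γ, c)`-radial limit points of `E`. -/
def gammaRadialPoints {n : ℕ} (E : Set (Pt n)) (γ c : ℝ) : Set (Pt n) :=
  {z | z ∈ limitSet E ∧ ∀ r > 0, ∃ x ∈ E,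
    dist x z ≤ c * (1 - ‖x‖) ^ γ ∧ c * (1 - ‖x‖) ^ γ ≤ c * r ^ γ}

/-- The `γ`-radial limit set `L_rad^γ(E) = ⋃_{c ≥ 1} L_c^γ(E)`. -/
def gammaRadialLimitSet {n : ℕ} (E : Set (Pt n)) (γ : ℝ) : Set (Pt n) :=
  ⋃ c ∈ Ici (1 : ℝ), gammaRadialPoints E γ c

/-- The packing number `N_δ(F)`: the maximal cardinality of a packing of `F` by
pairwise disjoint closed balls of radius `δ` centred in `F`. -/
def packingNumber {n : ℕ} (F : Set (Pt n)) (δ : ℝ) : ℕ∞ :=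
  ⨆ (Z : Finset (Pt n)) (_ : ↑Z ⊆ F)
    (_ : (Z : Set (Pt n)).PairwiseDisjoint fun x => closedBall x δ), (Z.card : ℕ∞)

/-- The upper box dimension `limsup_{δ → 0⁺} log N_δ(F) / (-log δ)`. -/
def upperBoxDim {n : ℕ} (F : Set (Pt n)) : ℝ≥0∞ :=
  limsup (fun δ : ℝ =>
    ENNReal.ofReal (Real.log ((packingNumber F δ).toNat : ℝ) / (-Real.log δ)))
    (nhdsWithin 0 (Ioi 0))

/-- The lower box dimension `liminf_{δ → 0⁺} log N_δ(F) / (-log δ)`. -/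
def lowerBoxDim {n : ℕ} (F : Set (Pt n)) : ℝ≥0∞ :=
  liminf (fun δ : ℝ =>
    ENNReal.ofReal (Real.log ((packingNumber F δ).toNat : ℝ) / (-Real.log δ)))
    (nhdsWithin 0 (Ioi 0))

section AuxLemmas
open MeasureTheory

lemma count_lemma {n : ℕ} {r R : ℝ} (hr : 0 < r) (hR : 0 ≤ R) (x₀ : Pt n) (Z : Finset (Pt n))
    (hZR : ∀ z ∈ Z, dist z x₀ ≤ R)
    (hsep : (Z : Set (Pt n)).Pairwise fun a b => 2 * r < dist a b) :
    (Z.card : ℝ) ≤ ((R + r) / r) ^ n := by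
  have hfr : Module.finrank ℝ (Pt n) = n := finrank_euclideanSpace_fin
  have hdisj : (Z : Set (Pt n)).PairwiseDisjoint fun z => closedBall z r := by
    intro a ha b hb hab
    exact closedBall_disjoint_closedBall (by linarith [hsep ha hb hab])
  have hsub : ∀ z ∈ Z, closedBall z r ⊆ closedBall x₀ (R + r) := by
    intro z hz y hy
    have := hZR z hz
    calc dist y x₀ ≤ dist y z + dist z x₀ := dist_triangle _ _ _
      _ ≤ r + R := add_le_add (mem_closedBall.mp hy) this
      _ = R + r := add_comm _ _
  have hmeas : volume (⋃ z ∈ Z, closedBall z r) = ∑ z ∈ Z, volume (closedBall z r) :=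
    measure_biUnion_finset hdisj fun z _ => measurableSet_closedBall
  have hball : ∀ z : Pt n, volume (closedBall z r)
      = ENNReal.ofReal (r ^ n) * volume (ball (0 : Pt n) 1) := by
    intro z
    rw [Measure.addHaar_closedBall volume z hr.le, hfr]
  have hle : (Z.card : ℝ≥0∞) * (ENNReal.ofReal (r ^ n) * volume (ball (0 : Pt n) 1))
      ≤ ENNReal.ofReal ((R + r) ^ n) * volume (ball (0 : Pt n) 1) := by
    calc (Z.card : ℝ≥0∞) * (ENNReal.ofReal (r ^ n) * volume (ball (0 : Pt n) 1))
        = ∑ z ∈ Z, volume (closedBall z r) := by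
          simp [hball, Finset.sum_const, nsmul_eq_mul]
      _ = volume (⋃ z ∈ Z, closedBall z r) := hmeas.symm
      _ ≤ volume (closedBall x₀ (R + r)) := measure_mono (by
          intro y hy; simp only [mem_iUnion] at hy
          obtain ⟨z, hz, hyz⟩ := hy; exact hsub z hz hyz)
      _ = ENNReal.ofReal ((R + r) ^ n) * volume (ball (0 : Pt n) 1) := by
          rw [Measure.addHaar_closedBall volume x₀ (by linarith), hfr]
  have h0 : volume (ball (0 : Pt n) 1) ≠ 0 :=
    (measure_ball_pos volume _ one_pos).ne'
  have htop : volume (ball (0 : Pt n) 1) ≠ ⊤ := measure_ball_lt_top.ne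
  have hle2 : (Z.card : ℝ≥0∞) * ENNReal.ofReal (r ^ n) ≤ ENNReal.ofReal ((R + r) ^ n) := by
    rw [← mul_assoc] at hle
    exact (ENNReal.mul_le_mul_iff_left h0 htop).mp hle
  have hle3 : (Z.card : ℝ) * r ^ n ≤ (R + r) ^ n := by
    rw [← ENNReal.ofReal_le_ofReal_iff (by positivity : (0:ℝ) ≤ (R + r) ^ n)]
    calc ENNReal.ofReal ((Z.card : ℝ) * r ^ n)
        = (Z.card : ℝ≥0∞) * ENNReal.ofReal (r ^ n) := by
          rw [ENNReal.ofReal_mul (by positivity)]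
          simp
      _ ≤ _ := hle2
  have hrn : (0:ℝ) < r ^ n := by positivity
  rw [div_pow, le_div_iff₀ hrn]
  exact hle3

lemma nat_le_rpow_of_log {N : ℕ} {δ t : ℝ} (hδ0 : 0 < δ) (hδ1 : δ < 1)
    (h : Real.log (N : ℝ) / (-Real.log δ) < t) : (N : ℝ) ≤ δ ^ (-t) := by
  have hlog : 0 < -Real.log δ := by
    have := Real.log_neg hδ0 hδ1; linarith
  have h2 : Real.log (N : ℝ) < t * (-Real.log δ) := by
    have := (div_lt_iff₀ hlog).mp h; linarith [this]
  rcases Nat.eq_zero_or_pos N with hN | hN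
  · subst hN; simp; positivity
  · have hN1 : (1:ℝ) ≤ (N:ℝ) := by exact_mod_cast hN
    have : (N : ℝ) = Real.exp (Real.log (N:ℝ)) := (Real.exp_log (by linarith)).symm
    rw [this, Real.rpow_def_of_pos hδ0]
    apply Real.exp_le_exp.mpr
    nlinarith

lemma exists_maximal_separated {n : ℕ} (T : Finset (Pt n)) {δ : ℝ} (hδ : 0 ≤ δ) :
    ∃ Z : Finset (Pt n), Z ⊆ T ∧ ((Z : Set (Pt n)).Pairwise fun a b => 2*δ < dist a b) ∧
      ∀ w ∈ T, ∃ z ∈ Z, dist w z ≤ 2*δ := by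
  classical
  set P : Finset (Pt n) → Prop := fun Z => (Z : Set (Pt n)).Pairwise fun a b => 2*δ < dist a b
  set C := T.powerset.filter fun Z => P Z with hC
  have hCne : C.Nonempty := ⟨∅, by simp [hC, P]⟩
  obtain ⟨Z, hZC, hZmax⟩ := C.exists_max_image Finset.card hCne
  rw [hC, Finset.mem_filter, Finset.mem_powerset] at hZC
  refine ⟨Z, hZC.1, hZC.2, ?_⟩
  intro w hw
  by_contra hcon
  push_neg at hcon
  have hwZ : w ∉ Z := fun hwZ => absurd (hcon w hwZ) (by simpa using hδ)
  have hpair : P (insert w Z) := by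
    have hsymm : Symmetric fun (a b : Pt n) => 2*δ < dist a b := by
      intro a b hab; rwa [dist_comm]
    show ((insert w Z : Finset (Pt n)) : Set (Pt n)).Pairwise _
    haveI : Std.Symm fun (a b : Pt n) => 2*δ < dist a b := ⟨fun a b h => hsymm h⟩
    rw [Finset.coe_insert, Set.pairwise_insert_of_symm]
    exact ⟨hZC.2, fun b hb _ => hcon b hb⟩
  have hmem : insert w Z ∈ C := by
    rw [hC, Finset.mem_filter, Finset.mem_powerset]
    exact ⟨Finset.insert_subset hw hZC.1, hpair⟩
  have := hZmax _ hmem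
  rw [Finset.card_insert_of_notMem hwZ] at this
  omega

lemma finite_of_separated {n : ℕ} {r R : ℝ} (hr : 0 < r) (hR : 0 ≤ R) (x₀ : Pt n)
    (A : Set (Pt n)) (hAR : ∀ x ∈ A, dist x x₀ ≤ R)
    (hsep : A.Pairwise fun a b => 2 * r < dist a b) : A.Finite := by
  by_contra h
  obtain ⟨Z, hZA, hZcard⟩ := (Set.Infinite.exists_subset_card_eq (h : A.Infinite))
    (⌊((R + r) / r) ^ n⌋₊ + 1)
  have hb := count_lemma hr hR x₀ Z (fun z hz => hAR z (hZA hz)) (hsep.mono hZA)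
  rw [hZcard] at hb
  have := Nat.lt_succ_floor (((R + r) / r) ^ n)
  push_cast at hb this
  linarith

lemma dist_gt_of_disjoint {n : ℕ} {δ : ℝ} (hδ : 0 ≤ δ) {x y : Pt n}
    (h : Disjoint (closedBall x δ) (closedBall y δ)) : 2 * δ < dist x y := by
  by_contra hc
  push_neg at hc
  set m := midpoint ℝ x y
  have h1 : dist x m = dist x y / 2 := by
    rw [dist_left_midpoint]; norm_num; ring
  have h2 : dist y m = dist x y / 2 := by
    rw [dist_right_midpoint]; norm_num; rw [dist_comm]; ring
  have hm1 : m ∈ closedBall x δ := by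
    rw [mem_closedBall, dist_comm, h1]; linarith
  have hm2 : m ∈ closedBall y δ := by
    rw [mem_closedBall, dist_comm, h2]; linarith
  exact Set.disjoint_left.mp h hm1 hm2

lemma packingNumber_le {n : ℕ} {F : Set (Pt n)} {δ : ℝ} {m : ℕ}
    (h : ∀ Z : Finset (Pt n), ↑Z ⊆ F →
      ((Z : Set (Pt n)).PairwiseDisjoint fun x => closedBall x δ) → Z.card ≤ m) :
    packingNumber F δ ≤ (m : ℕ∞) := by
  apply iSup_le; intro Z; apply iSup_le; intro h1; apply iSup_le; intro h2
  exact_mod_cast h Z h1 h2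

lemma card_le_packingNumber {n : ℕ} {F : Set (Pt n)} {δ : ℝ} (Z : Finset (Pt n))
    (h1 : ↑Z ⊆ F) (h2 : (Z : Set (Pt n)).PairwiseDisjoint fun x => closedBall x δ) :
    (Z.card : ℕ∞) ≤ packingNumber F δ :=
  le_iSup_of_le Z (le_iSup_of_le h1 (le_iSup_of_le h2 le_rfl))

lemma packingNumber_lt_top {n : ℕ} {F : Set (Pt n)} {δ : ℝ} (hδ : 0 < δ)
    (hF : F ⊆ closedBall (0 : Pt n) 1) : packingNumber F δ ≠ ⊤ := by
  have : packingNumber F δ ≤ ((⌊((1 + δ) / δ) ^ n⌋₊ : ℕ) : ℕ∞) := by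
    apply packingNumber_le
    intro Z hZF hZd
    have hsep : (Z : Set (Pt n)).Pairwise fun a b => 2 * δ < dist a b := by
      intro a ha b hb hab
      exact dist_gt_of_disjoint hδ.le (hZd ha hb hab)
    have := count_lemma hδ zero_le_one (0 : Pt n) Z
      (fun z hz => by simpa [dist_eq_norm] using mem_closedBall_zero_iff.mp (hF (hZF hz))) hsep
    exact Nat.le_floor this
  exact ne_top_of_le_ne_top (by simp) this

end AuxLemmas

set_option maxHeartbeats 1000000 in
/-- **Theorem (separated + well-approximated ⇒ δ(E) ≤ upper box dimension of L(E))**. -/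
theorem critExp_le_upperBoxDim_limitSet {n : ℕ} (hn : 1 ≤ n)
    (E : Set (Pt n)) (hE : E ⊆ ball 0 1)
    (hdisc : IsDiscreteSet E) (hsep : SeparatedSet E) (hwa : WellApproximated E) :
    critExp E ≤ upperBoxDim (limitSet E) := by
  classical
  obtain ⟨c₁, hc₁0, hc₁1, hsep'⟩ := hsep
  obtain ⟨c₂, hc₂1, hwa'⟩ := hwa
  set L := limitSet E with hLdef
  have hLsub : L ⊆ closedBall (0 : Pt n) 1 := by
    intro z hz
    have : z ∈ closure E := hz.1
    have h2 : closure E ⊆ closedBall 0 1 :=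
      closure_minimal (hE.trans ball_subset_closedBall) isClosed_closedBall
    exact h2 this
  -- reduce to: for every t above upperBoxDim, critExp ≤ t
  suffices H : ∀ t : ℝ≥0, upperBoxDim L < (t : ℝ≥0∞) → critExp E ≤ (t : ℝ≥0∞) by
    by_contra hcon
    push_neg at hcon
    obtain ⟨r, h1, h2⟩ := ENNReal.lt_iff_exists_nnreal_btwn.mp hcon
    exact absurd (H r h1) (not_le.mpr h2)
  intro t ht
  obtain ⟨t', ht'D, ht't⟩ := ENNReal.lt_iff_exists_nnreal_btwn.mp ht
  have ht'0 : 0 < (t' : ℝ) := by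
    have : (0 : ℝ≥0∞) < t' := lt_of_le_of_lt zero_le ht'D
    exact_mod_cast this
  have htt' : (t' : ℝ) < (t : ℝ) := by exact_mod_cast ht't
  -- the convergence of the accumulation series at exponent t
  suffices hconv : accSeries E (t : ℝ) < ⊤ by
    exact iInf₂_le t hconv
  -- choice of approximating limit points
  have zc_spec : ∀ x ∈ E, (if hx : x ∈ E then (hwa' x hx).choose else x) ∈ L ∧
      dist x (if hx : x ∈ E then (hwa' x hx).choose else x) ≤ c₂ * (1 - ‖x‖) := by
    intro x hx
    rw [dif_pos hx]
    exact ⟨((hwa' x hx).choose_spec).1, ((hwa' x hx).choose_spec).2⟩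
  set zc : Pt n → Pt n := fun x => if hx : x ∈ E then (hwa' x hx).choose else x with hzc
  -- eventual packing estimate
  have hev : ∀ᶠ δ in nhdsWithin (0:ℝ) (Ioi 0), ENNReal.ofReal
      (Real.log ((packingNumber L δ).toNat : ℝ) / (-Real.log δ)) < (t' : ℝ≥0∞) :=
    Filter.eventually_lt_of_limsup_lt ht'D
  rw [eventually_nhdsWithin_iff, Metric.eventually_nhds_iff] at hev
  obtain ⟨ε, hε0, hev⟩ := hev
  set b : ℝ := (2:ℝ)⁻¹ with hbdef
  have hb0 : (0:ℝ) < b := by norm_num [hbdef]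
  have hb1 : b < 1 := by norm_num [hbdef]
  obtain ⟨k₀, hk₀⟩ : ∃ k₀ : ℕ, b ^ k₀ < min ε 1 := by
    obtain ⟨k, hk⟩ := exists_pow_lt_of_lt_one (lt_min hε0 one_pos) hb1
    exact ⟨k, hk⟩
  have hsmall : ∀ k ≥ k₀, b ^ k < min ε 1 := fun k hk =>
    lt_of_le_of_lt (pow_le_pow_of_le_one hb0.le hb1.le hk) hk₀
  -- dyadic annuli
  set A : ℕ → Set (Pt n) := fun k => {x | x ∈ E ∧ b ^ (k+1) < 1 - ‖x‖ ∧ 1 - ‖x‖ ≤ b ^ k}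
    with hAdef
  have hAE : ∀ k, A k ⊆ E := fun k x hx => hx.1
  have hEsub : E ⊆ ⋃ k, A k := by
    intro x hx
    have hx1 : ‖x‖ < 1 := mem_ball_zero_iff.mp (hE hx)
    have hu0 : 0 < 1 - ‖x‖ := by linarith
    have hu1 : 1 - ‖x‖ ≤ 1 := by linarith [norm_nonneg x]
    obtain ⟨m, hm⟩ := exists_pow_lt_of_lt_one hu0 hb1
    have hP : ∃ k, b ^ (k+1) < 1 - ‖x‖ :=
      ⟨m, lt_of_le_of_lt (pow_le_pow_of_le_one hb0.le hb1.le (Nat.le_succ m)) hm⟩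
    set k := Nat.find hP with hkdef
    refine mem_iUnion.mpr ⟨k, hx, Nat.find_spec hP, ?_⟩
    rcases Nat.eq_zero_or_pos k with hk0 | hkpos
    · rw [hk0]; simpa using hu1
    · have := Nat.find_min hP (m := k - 1) (by omega)
      push_neg at this
      have hkk : k - 1 + 1 = k := by omega
      rwa [hkk] at this
  -- separation within each annulus
  have hApair : ∀ k, (A k).Pairwise fun x y => 2 * (c₁ * b ^ (k+1) / 2) < dist x y := by
    intro k x hx y hy hxy
    have h1 := hsep' x hx.1
    have hynot : y ∉ closedBall x (c₁ * (1 - ‖x‖)) := by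
      intro hy'
      have : y ∈ ({x} : Set (Pt n)) := by rw [← h1]; exact ⟨hy', hy.1⟩
      exact hxy.symm (by simpa using this)
    rw [mem_closedBall, not_le] at hynot
    have : c₁ * b ^ (k+1) < c₁ * (1 - ‖x‖) :=
      (mul_lt_mul_iff_right₀ hc₁0).mpr hx.2.1
    rw [dist_comm] at hynot
    have h2 : 2 * (c₁ * b ^ (k+1) / 2) = c₁ * b ^ (k+1) := by ring
    rw [h2]
    linarith
  -- finiteness of each annulus
  have hAfin : ∀ k, (A k).Finite := by
    intro k
    apply finite_of_separated (r := c₁ * b ^ (k+1) / 2) (by positivity) zero_le_one (0 : Pt n)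
      (A k) ?_ (hApair k)
    intro x hx
    have : ‖x‖ < 1 := mem_ball_zero_iff.mp (hE hx.1)
    simpa [dist_eq_norm] using this.le
  -- cardinality bound constants
  set ρ : ℝ := ((c₂ + 2) + c₁ * b / 2) / (c₁ * b / 2) with hρdef
  set Cfib : ℝ := ρ ^ n with hCdef
  have hCpos : 0 < Cfib := by
    have : 0 < ρ := by
      apply div_pos (by positivity) (by positivity)
    positivity
  -- main cardinality estimate
  have hcard : ∀ k ≥ k₀, (((hAfin k).toFinset.card : ℝ)) ≤
      Cfib * (b ^ k) ^ (-(t' : ℝ)) := by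
    intro k hk
    set δ : ℝ := b ^ k with hδdef
    have hδ0 : 0 < δ := by positivity
    have hδε : δ < ε := lt_of_lt_of_le (hsmall k hk) (min_le_left _ _)
    have hδ1 : δ < 1 := lt_of_lt_of_le (hsmall k hk) (min_le_right _ _)
    set Afin := (hAfin k).toFinset with hAfindef
    set T := Afin.image zc with hTdef
    obtain ⟨Z, hZT, hZpair, hZmax⟩ := exists_maximal_separated T hδ0.le
    have hTL : ∀ w ∈ T, ∃ x ∈ A k, zc x = w := by
      intro w hw
      obtain ⟨x, hx, hxw⟩ := Finset.mem_image.mp hw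
      exact ⟨x, (hAfin k).mem_toFinset.mp hx, hxw⟩
    have hZL : ↑Z ⊆ L := by
      intro w hw
      obtain ⟨x, hx, hxw⟩ := hTL w (hZT hw)
      rw [← hxw]
      exact (zc_spec x (hAE k hx)).1
    have hZdisj : (Z : Set (Pt n)).PairwiseDisjoint fun x => closedBall x δ := by
      intro a ha c hc hac
      exact closedBall_disjoint_closedBall (by linarith [hZpair ha hc hac])
    -- packing bound on Z
    have hZcard : (Z.card : ℝ) ≤ δ ^ (-(t' : ℝ)) := by
      have hfin := packingNumber_lt_top hδ0 hLsub
      have h1 : (Z.card : ℕ∞) ≤ packingNumber L δ := card_le_packingNumber Z hZL hZdisj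
      rw [← ENat.coe_toNat hfin, Nat.cast_le] at h1
      have h3 : (((packingNumber L δ).toNat : ℕ) : ℝ) ≤ δ ^ (-(t' : ℝ)) := by
        apply nat_le_rpow_of_log hδ0 hδ1
        have hd : dist δ 0 < ε := by
          rw [Real.dist_eq, sub_zero, abs_of_pos hδ0]; exact hδε
        have := hev hd (mem_Ioi.mpr hδ0)
        rwa [← ENNReal.ofReal_coe_nnreal, ENNReal.ofReal_lt_ofReal_iff ht'0] at this
      exact le_trans (by exact_mod_cast h1) h3
    -- covering of Afin by fibers over Z
    set f : Pt n → Finset (Pt n) := fun z' => Afin.filter fun x => dist (zc x) z' ≤ 2*δ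
      with hfdef
    have hAcover : Afin ⊆ Z.biUnion f := by
      intro x hx
      have hxT : zc x ∈ T := Finset.mem_image_of_mem zc hx
      obtain ⟨z', hz', hdz'⟩ := hZmax (zc x) hxT
      exact Finset.mem_biUnion.mpr ⟨z', hz', Finset.mem_filter.mpr ⟨hx, hdz'⟩⟩
    -- each fiber is small
    have hfiber : ∀ z' ∈ Z, ((f z').card : ℝ) ≤ Cfib := by
      intro z' _
      set r : ℝ := c₁ * b ^ (k+1) / 2 with hrdef
      have hr0 : 0 < r := by positivity
      set R : ℝ := (c₂ + 2) * δ with hRdef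
      have hR0 : 0 ≤ R := by positivity
      have hcl := count_lemma (n := n) hr0 hR0 z' (f z') ?_ ?_
      · have hrδ : r = (c₁ * b / 2) * δ := by
          rw [hrdef, hδdef, pow_succ]; ring
        have hratio : (R + r) / r = ρ := by
          rw [hRdef, hrδ, hρdef]
          rw [show (c₂ + 2) * δ + (c₁ * b / 2) * δ = ((c₂ + 2) + c₁ * b / 2) * δ by ring]
          rw [mul_div_mul_right _ _ hδ0.ne']
        rwa [hratio, ← hCdef] at hcl
      · intro x hxf
        obtain ⟨hxA, hxd⟩ := Finset.mem_filter.mp hxf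
        have hxAk : x ∈ A k := (hAfin k).mem_toFinset.mp hxA
        have hxE : x ∈ E := hAE k hxAk
        have h1 : dist x (zc x) ≤ c₂ * (1 - ‖x‖) := (zc_spec x hxE).2
        have h2 : 1 - ‖x‖ ≤ δ := hxAk.2.2
        have hc₂0 : (0:ℝ) < c₂ := lt_of_lt_of_le one_pos hc₂1
        calc dist x z' ≤ dist x (zc x) + dist (zc x) z' := dist_triangle _ _ _
          _ ≤ c₂ * (1 - ‖x‖) + 2*δ := add_le_add h1 hxd
          _ ≤ c₂ * δ + 2*δ := by nlinarith
          _ = R := by rw [hRdef]; ring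
      · have hsub : ((f z' : Finset (Pt n)) : Set (Pt n)) ⊆ A k := by
          intro x hx
          simp only [hfdef, Finset.coe_filter, Set.mem_setOf_eq] at hx
          exact (hAfin k).mem_toFinset.mp hx.1
        exact (hApair k).mono hsub
    -- combine
    have h4 : (Afin.card : ℝ) ≤ (Z.card : ℝ) * Cfib := by
      have h5 : Afin.card ≤ ∑ z' ∈ Z, (f z').card :=
        le_trans (Finset.card_le_card hAcover) (Finset.card_biUnion_le)
      have h6 : (Afin.card : ℝ) ≤ ∑ z' ∈ Z, ((f z').card : ℝ) := by exact_mod_cast h5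
      calc (Afin.card : ℝ) ≤ ∑ z' ∈ Z, ((f z').card : ℝ) := h6
        _ ≤ Z.card • Cfib := Finset.sum_le_card_nsmul _ _ _ hfiber
        _ = (Z.card : ℝ) * Cfib := nsmul_eq_mul _ _
    calc ((hAfin k).toFinset.card : ℝ) = (Afin.card : ℝ) := rfl
      _ ≤ (Z.card : ℝ) * Cfib := h4
      _ ≤ δ ^ (-(t' : ℝ)) * Cfib := by
          apply mul_le_mul_of_nonneg_right hZcard hCpos.le
      _ = Cfib * (b ^ k) ^ (-(t' : ℝ)) := by rw [hδdef, mul_comm]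
  -- assemble the series
  set g : Pt n → ℝ≥0∞ := fun x => ENNReal.ofReal ((1 - ‖x‖) ^ (t : ℝ)) with hgdef
  set w : ℕ → ℝ≥0∞ := fun k => ENNReal.ofReal ((b ^ k) ^ (t : ℝ)) with hwdef
  set Nk : ℕ → ℝ≥0∞ := fun k => (((hAfin k).toFinset.card : ℕ) : ℝ≥0∞) with hNdef
  have hsum_k : ∀ k, (∑' x : A k, g x) ≤ Nk k * w k := by
    intro k
    have h1 : (∑' x : A k, g x) = ∑ x ∈ (hAfin k).toFinset, g x := by
      rw [tsum_congr_set_coe g (Set.Finite.coe_toFinset (hAfin k)).symm,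
        Finset.tsum_subtype']
    rw [h1]
    calc ∑ x ∈ (hAfin k).toFinset, g x ≤ (hAfin k).toFinset.card • w k := by
          apply Finset.sum_le_card_nsmul
          intro x hx
          have hxA : x ∈ A k := (hAfin k).mem_toFinset.mp hx
          have hx0 : 0 ≤ 1 - ‖x‖ := le_of_lt (lt_of_le_of_lt (by positivity) hxA.2.1)
          exact ENNReal.ofReal_le_ofReal
            (Real.rpow_le_rpow hx0 hxA.2.2 t.coe_nonneg)
      _ = Nk k * w k := by rw [nsmul_eq_mul]
  have hstep1 : accSeries E (t : ℝ) ≤ ∑' k, Nk k * w k := by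
    calc accSeries E (t : ℝ) = ∑' x : E, g x := rfl
      _ ≤ ∑' x : (⋃ k, A k), g x := ENNReal.tsum_mono_subtype g hEsub
      _ ≤ ∑' k, ∑' x : A k, g x := ENNReal.tsum_iUnion_le_tsum g A
      _ ≤ ∑' k, Nk k * w k := ENNReal.tsum_le_tsum hsum_k
  set q : ℝ := b ^ ((t : ℝ) - (t' : ℝ)) with hqdef
  have hq0 : 0 < q := Real.rpow_pos_of_pos hb0 _
  have hq1 : q < 1 := Real.rpow_lt_one hb0.le hb1 (by linarith)
  have hterm : ∀ k ≥ k₀, Nk k * w k ≤ ENNReal.ofReal Cfib * ENNReal.ofReal (q ^ k) := by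
    intro k hk
    have hbk0 : (0:ℝ) < b ^ k := pow_pos hb0 k
    have hNw : Nk k * w k
        = ENNReal.ofReal ((((hAfin k).toFinset.card : ℕ) : ℝ) * (b ^ k) ^ (t : ℝ)) := by
      rw [ENNReal.ofReal_mul (by positivity), ENNReal.ofReal_natCast]
    have hqk : (b ^ k : ℝ) ^ ((t : ℝ) - (t' : ℝ)) = q ^ k := by
      rw [← Real.rpow_natCast b k, ← Real.rpow_natCast q k, hqdef,
        ← Real.rpow_mul hb0.le, ← Real.rpow_mul hb0.le, mul_comm]
    have hreal : (((hAfin k).toFinset.card : ℕ) : ℝ) * (b ^ k) ^ (t : ℝ)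
        ≤ Cfib * q ^ k := by
      have h2 := mul_le_mul_of_nonneg_right (hcard k hk)
        (Real.rpow_nonneg hbk0.le (t : ℝ))
      apply le_trans h2
      rw [mul_assoc, ← Real.rpow_add hbk0]
      rw [show -(t' : ℝ) + (t : ℝ) = (t : ℝ) - (t' : ℝ) by ring, hqk]
    rw [hNw, ← ENNReal.ofReal_mul hCpos.le]
    exact ENNReal.ofReal_le_ofReal hreal
  set F : ℕ → ℝ≥0∞ := fun k => if k < k₀ then Nk k * w k else 0 with hFdef
  set G : ℕ → ℝ≥0∞ := fun k => ENNReal.ofReal Cfib * ENNReal.ofReal (q ^ k) with hGdef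
  have hsplit : ∀ k, Nk k * w k ≤ F k + G k := by
    intro k
    by_cases hk : k < k₀
    · rw [hFdef]; simp only [if_pos hk]; exact le_self_add
    · rw [hFdef]; simp only [if_neg hk, zero_add]
      exact hterm k (le_of_not_gt hk)
  have hF : (∑' k, F k) < ⊤ := by
    rw [tsum_eq_sum (s := Finset.range k₀) (fun k hk => by
      simp only [Finset.mem_range, not_lt] at hk
      rw [hFdef]; simp only [if_neg (not_lt.mpr hk)])]
    apply ENNReal.sum_lt_top.mpr
    intro k _
    rw [hFdef]
    by_cases hk : k < k₀
    · simp only [if_pos hk]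
      exact ENNReal.mul_lt_top (ENNReal.natCast_lt_top _) ENNReal.ofReal_lt_top
    · simp only [if_neg hk]; exact ENNReal.zero_lt_top
  have hG : (∑' k, G k) < ⊤ := by
    rw [hGdef]
    rw [ENNReal.tsum_mul_left]
    apply ENNReal.mul_lt_top ENNReal.ofReal_lt_top
    have : (∑' k : ℕ, ENNReal.ofReal (q ^ k)) = ∑' k : ℕ, (ENNReal.ofReal q) ^ k := by
      apply tsum_congr; intro k; rw [ENNReal.ofReal_pow hq0.le]
    rw [this, ENNReal.tsum_geometric]
    apply ENNReal.inv_lt_top.mpr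
    exact tsub_pos_iff_lt.mpr (ENNReal.ofReal_lt_one.mpr hq1)
  calc accSeries E (t : ℝ) ≤ ∑' k, Nk k * w k := hstep1
    _ ≤ ∑' k, (F k + G k) := ENNReal.tsum_le_tsum hsplit
    _ = (∑' k, F k) + (∑' k, G k) := ENNReal.tsum_add
    _ < ⊤ := ENNReal.add_lt_top.mpr ⟨hF, hG⟩


end
end

section
/- Let n ≥ 1 and let E ⊆ 𝔻ⁿ be any discrete set. Then the Hausdorff dimension of the radial limit set L_rad(E) is at most the critical exponent δ(E). -/
open Metric Set Filter
open scoped ENNReal NNReal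

noncomputable section

section Aux
open MeasureTheory Topology

/-! ### Auxiliary lemmas for the proof -/

lemma radialPoints_mono_aux {n : ℕ} {E : Set (Pt n)} (hE : E ⊆ ball 0 1) {c c' : ℝ}
    (hc : 0 < c) (hcc : c ≤ c') : radialPoints E c ⊆ radialPoints E c' := by
  rintro z ⟨hz, h⟩
  refine ⟨hz, fun r hr => ?_⟩
  obtain ⟨x, hx, h1, h2⟩ := h r hr
  have hx1 : (0:ℝ) ≤ 1 - ‖x‖ := by
    have := mem_ball_zero_iff.1 (hE hx); linarith
  have hr' : 1 - ‖x‖ ≤ r := le_of_mul_le_mul_left h2 hc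
  exact ⟨x, hx, h1.trans (mul_le_mul_of_nonneg_right hcc hx1),
    mul_le_mul_of_nonneg_left hr' (hc.le.trans hcc)⟩

lemma countable_of_accSeries_lt_top_aux {n : ℕ} {E : Set (Pt n)} (hE : E ⊆ ball 0 1)
    {s : ℝ≥0} (hs : accSeries E (s : ℝ) < ⊤) : Countable E := by
  have hcnt := Summable.countable_support_ennreal
    (f := fun x : E => ENNReal.ofReal ((1 - ‖(x : Pt n)‖) ^ (s:ℝ))) hs.ne
  have hsupp : (Function.support fun x : E =>
      ENNReal.ofReal ((1 - ‖(x : Pt n)‖) ^ (s:ℝ))) = Set.univ := by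
    ext x
    simp only [Function.mem_support, Set.mem_univ, iff_true]
    have hx : ‖(x : Pt n)‖ < 1 := mem_ball_zero_iff.1 (hE x.2)
    have h1 : (0:ℝ) < 1 - ‖(x:Pt n)‖ := by linarith
    exact (ENNReal.ofReal_pos.2 (Real.rpow_pos_of_pos h1 _)).ne'
  rw [hsupp] at hcnt
  exact Set.countable_univ_iff.mp hcnt

lemma dimH_radialPoints_le_aux {n : ℕ} {E : Set (Pt n)} (hE : E ⊆ ball 0 1)
    {c : ℝ} (hc : 1 ≤ c) {s : ℝ≥0} (hs : accSeries E (s : ℝ) < ⊤) :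
    dimH (radialPoints E c) ≤ (s : ℝ≥0∞) := by
  have hc0 : (0:ℝ) < c := lt_of_lt_of_le one_pos hc
  haveI : Countable E := countable_of_accSeries_lt_top_aux hE hs
  refine dimH_le fun d hd => ?_
  by_contra hds
  push_neg at hds
  rw [ENNReal.coe_lt_coe, ← NNReal.coe_lt_coe] at hds
  have hd0 : (0:ℝ) < (d:ℝ) - (s:ℝ) := by linarith
  have hdpos : (0:ℝ) < (d:ℝ) := lt_of_le_of_lt s.coe_nonneg hds
  set F := radialPoints E c with hF
  set t : ℕ → E → Set (Pt n) := fun k x =>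
    if 1 - ‖(x:Pt n)‖ ≤ 1/(k+1) then closedBall (x:Pt n) (c * (1 - ‖(x:Pt n)‖)) else ∅
    with ht_def
  have hdiam : ∀ k : ℕ, ∀ x : E, EMetric.diam (t k x) ≤
      ENNReal.ofReal (2*c) * ENNReal.ofReal (1/(k+1)) := by
    intro k x
    simp only [ht_def]
    split_ifs with h
    · rw [← ENNReal.ofReal_mul (by positivity)]
      refine EMetric.diam_le fun a ha b hb => ?_
      rw [edist_dist]
      refine ENNReal.ofReal_le_ofReal ?_
      have ha' := mem_closedBall.1 ha
      have hb' := mem_closedBall.1 hb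
      have htri := dist_triangle a (x:Pt n) b
      have hub : c * (1 - ‖(x:Pt n)‖) ≤ c * (1/(k+1)) :=
        mul_le_mul_of_nonneg_left h hc0.le
      nlinarith [dist_comm b (x:Pt n)]
    · simp [EMetric.diam]
  have key : μH[(d:ℝ)] F ≤ liminf (fun k => ∑' x : E, (EMetric.diam (t k x)) ^ (d:ℝ)) atTop := by
    refine MeasureTheory.Measure.hausdorffMeasure_le_liminf_tsum (d:ℝ) F
      (r := fun k : ℕ => ENNReal.ofReal (2*c) * ENNReal.ofReal (1/(k+1))) ?_ t
      (Eventually.of_forall hdiam) (Eventually.of_forall ?_)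
    · have h1 : Tendsto (fun k:ℕ => ENNReal.ofReal (1/(k+1:ℝ))) atTop (nhds 0) := by
        rw [← ENNReal.ofReal_zero]
        exact ENNReal.tendsto_ofReal tendsto_one_div_add_atTop_nhds_zero_nat
      simpa using ENNReal.Tendsto.const_mul h1 (Or.inr (ENNReal.ofReal_ne_top (r := 2*c)))
    · intro k z hz
      obtain ⟨hz1, hz2⟩ := hz
      obtain ⟨x, hx, h1, h2⟩ := hz2 (1/(k+1)) (by positivity)
      have hk : 1 - ‖x‖ ≤ 1/(k+1) := le_of_mul_le_mul_left h2 hc0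
      refine mem_iUnion.2 ⟨⟨x, hx⟩, ?_⟩
      simp only [ht_def, if_pos hk]
      exact mem_closedBall.2 (by rwa [dist_comm])
  set C : ℝ≥0∞ := ENNReal.ofReal (2*c) ^ (d:ℝ) with hC
  have hterm : ∀ k : ℕ, ∀ x : E, (EMetric.diam (t k x)) ^ (d:ℝ) ≤
      C * ENNReal.ofReal (1/(k+1)) ^ ((d:ℝ) - (s:ℝ)) *
        ENNReal.ofReal ((1 - ‖(x:Pt n)‖) ^ (s:ℝ)) := by
    intro k x
    simp only [ht_def]
    have hx : ‖(x : Pt n)‖ < 1 := mem_ball_zero_iff.1 (hE x.2)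
    have h1 : (0:ℝ) < 1 - ‖(x:Pt n)‖ := by linarith
    split_ifs with h
    · have hdb : EMetric.diam (closedBall (x:Pt n) (c * (1 - ‖(x:Pt n)‖))) ≤
          ENNReal.ofReal (2*c) * ENNReal.ofReal (1 - ‖(x:Pt n)‖) := by
        rw [← ENNReal.ofReal_mul (by positivity)]
        refine EMetric.diam_le fun a ha b hb => ?_
        rw [edist_dist]
        refine ENNReal.ofReal_le_ofReal ?_
        have ha' := mem_closedBall.1 ha
        have hb' := mem_closedBall.1 hb
        have htri := dist_triangle a (x:Pt n) b
        nlinarith [dist_comm b (x:Pt n)]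
      calc (EMetric.diam (closedBall (x:Pt n) (c * (1 - ‖(x:Pt n)‖)))) ^ (d:ℝ)
          ≤ (ENNReal.ofReal (2*c) * ENNReal.ofReal (1 - ‖(x:Pt n)‖)) ^ (d:ℝ) :=
            ENNReal.rpow_le_rpow hdb hdpos.le
        _ = C * ENNReal.ofReal (1 - ‖(x:Pt n)‖) ^ (d:ℝ) := by
            rw [ENNReal.mul_rpow_of_nonneg _ _ hdpos.le]
        _ = C * (ENNReal.ofReal (1 - ‖(x:Pt n)‖) ^ ((d:ℝ) - (s:ℝ)) *
              ENNReal.ofReal (1 - ‖(x:Pt n)‖) ^ (s:ℝ)) := by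
            rw [← ENNReal.rpow_add _ _ (ENNReal.ofReal_pos.2 h1).ne' ENNReal.ofReal_ne_top]
            ring_nf
        _ ≤ C * (ENNReal.ofReal (1/(k+1)) ^ ((d:ℝ) - (s:ℝ)) *
              ENNReal.ofReal (1 - ‖(x:Pt n)‖) ^ (s:ℝ)) := by
            gcongr
        _ = C * ENNReal.ofReal (1/(k+1)) ^ ((d:ℝ) - (s:ℝ)) *
              ENNReal.ofReal ((1 - ‖(x:Pt n)‖) ^ (s:ℝ)) := by
            rw [ENNReal.ofReal_rpow_of_nonneg h1.le s.coe_nonneg, mul_assoc]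
    · simp [EMetric.diam, EMetric.diam_empty, ENNReal.zero_rpow_of_pos hdpos]
  have hsum : ∀ k : ℕ, (∑' x : E, (EMetric.diam (t k x)) ^ (d:ℝ)) ≤
      C * ENNReal.ofReal (1/(k+1)) ^ ((d:ℝ) - (s:ℝ)) * accSeries E (s:ℝ) := by
    intro k
    calc (∑' x : E, (EMetric.diam (t k x)) ^ (d:ℝ))
        ≤ ∑' x : E, C * ENNReal.ofReal (1/(k+1)) ^ ((d:ℝ) - (s:ℝ)) *
            ENNReal.ofReal ((1 - ‖(x:Pt n)‖) ^ (s:ℝ)) := ENNReal.tsum_le_tsum (hterm k)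
      _ = _ := ENNReal.tsum_mul_left
  have hlim : Tendsto (fun k : ℕ => C * ENNReal.ofReal (1/(k+1)) ^ ((d:ℝ) - (s:ℝ)) *
      accSeries E (s:ℝ)) atTop (nhds 0) := by
    have h1 : Tendsto (fun k:ℕ => ENNReal.ofReal (1/(k+1:ℝ))) atTop (nhds 0) := by
      rw [← ENNReal.ofReal_zero]
      exact ENNReal.tendsto_ofReal tendsto_one_div_add_atTop_nhds_zero_nat
    have h2 : Tendsto (fun k:ℕ => ENNReal.ofReal (1/(k+1:ℝ)) ^ ((d:ℝ) - (s:ℝ)))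
        atTop (nhds 0) := by
      have := h1.ennrpow_const ((d:ℝ) - (s:ℝ))
      rwa [ENNReal.zero_rpow_of_pos hd0] at this
    have hCt : C ≠ ⊤ := ENNReal.rpow_ne_top_of_nonneg hdpos.le ENNReal.ofReal_ne_top
    have h3 := ENNReal.Tendsto.const_mul h2 (Or.inr hCt)
    rw [mul_zero] at h3
    have h4 := ENNReal.Tendsto.mul_const h3 (Or.inr hs.ne)
    rwa [zero_mul] at h4
  have hlim0 : liminf (fun k => ∑' x : E, (EMetric.diam (t k x)) ^ (d:ℝ)) atTop = 0 := by
    refine le_antisymm ?_ (zero_le)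
    calc liminf (fun k => ∑' x : E, (EMetric.diam (t k x)) ^ (d:ℝ)) atTop
        ≤ liminf (fun k : ℕ => C * ENNReal.ofReal (1/(k+1)) ^ ((d:ℝ) - (s:ℝ)) *
            accSeries E (s:ℝ)) atTop := liminf_le_liminf (Eventually.of_forall hsum)
      _ = 0 := hlim.liminf_eq
  rw [hlim0] at key
  exact ENNReal.zero_ne_top (le_antisymm key (zero_le) ▸ hd)

lemma radialLimitSet_eq_iUnion_aux {n : ℕ} {E : Set (Pt n)} (hE : E ⊆ ball 0 1) :
    radialLimitSet E = ⋃ k : ℕ, radialPoints E (k + 1) := by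
  apply Set.Subset.antisymm
  · intro z hz
    rw [radialLimitSet, mem_iUnion₂] at hz
    obtain ⟨c, hc, hzc⟩ := hz
    have hc1 : (1:ℝ) ≤ c := hc
    refine mem_iUnion.2 ⟨⌈c⌉₊, radialPoints_mono_aux hE (lt_of_lt_of_le one_pos hc1) ?_ hzc⟩
    exact (Nat.le_ceil c).trans (by push_cast; linarith)
  · refine iUnion_subset fun k => ?_
    intro z hz
    rw [radialLimitSet, mem_iUnion₂]
    exact ⟨(k:ℝ) + 1, by simp [mem_Ici], hz⟩

end Aux

/-- **Theorem (Hausdorff dimension of the radial limit set is at most δ(E))**. -/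
theorem dimH_radialLimitSet_le_critExp {n : ℕ} (hn : 1 ≤ n)
    (E : Set (Pt n)) (hE : E ⊆ ball 0 1) (hdisc : IsDiscreteSet E) :
    dimH (radialLimitSet E) ≤ critExp E := by
  rw [radialLimitSet_eq_iUnion_aux hE, dimH_iUnion]
  refine iSup_le fun k => ?_
  simp only [critExp]
  refine le_iInf fun s => le_iInf fun hs => ?_
  exact dimH_radialPoints_le_aux hE (by linarith [Nat.cast_nonneg (α := ℝ) k]) hs

end
end

section
/- Let n ≥ 1 and let E ⊆ 𝔻ⁿ be a discrete set that is separated and well-approximated, and suppose the Hausdorff dimension of the radial limit set L_rad(E) equals the upper box dimension of the limit set L(E). Then dim_H L(E) = dim_B L(E) = δ(E); that is, the Hausdorff dimension of L(E), the (existing) box dimension of L(E), and the critical exponent δ(E) all coincide. -/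
open Metric Set Filter
open scoped ENNReal NNReal

noncomputable section

namespace Dproof

open MeasureTheory
open scoped Topology

variable {n : ℕ}

/-- Cardinality bound for separated finsets in a ball (uniform over scales). -/
lemma card_sep_in_ball (C : ℝ) : ∃ M : ℕ, ∀ ρ : ℝ, 0 < ρ → ∀ (w : Pt n) (Z : Finset (Pt n)),
    (∀ x ∈ Z, dist x w ≤ C * ρ) → (∀ x ∈ Z, ∀ y ∈ Z, x ≠ y → ρ < dist x y) → Z.card ≤ M := by
  obtain ⟨T, hTfin, hTcov⟩ :=
    totallyBounded_iff.1 (isCompact_closedBall (0 : Pt n) C).totallyBounded (1/2) (by norm_num)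
  refine ⟨hTfin.toFinset.card, ?_⟩
  intro ρ hρ w Z hZball hZsep
  set g : Pt n → Pt n := fun x => ρ⁻¹ • (x - w) with hg
  have hgZ : ∀ x ∈ Z, ∃ t ∈ T, g x ∈ ball t (1/2) := by
    intro x hx
    have : g x ∈ closedBall (0 : Pt n) C := by
      simp only [mem_closedBall, dist_zero_right, hg, norm_smul, norm_inv, Real.norm_eq_abs,
        abs_of_pos hρ]
      have h1 : ‖x - w‖ ≤ C * ρ := by rw [← dist_eq_norm]; exact hZball x hx
      calc ρ⁻¹ * ‖x - w‖ ≤ ρ⁻¹ * (C * ρ) := by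
            exact mul_le_mul_of_nonneg_left h1 (by positivity)
        _ = C := by field_simp
    simpa using mem_iUnion₂.1 (hTcov this)
  have hdistg : ∀ x y : Pt n, dist (g x) (g y) = ρ⁻¹ * dist x y := by
    intro x y
    simp only [hg]
    rw [dist_smul₀, dist_sub_right, norm_inv, Real.norm_eq_abs, abs_of_pos hρ]
  classical
  set f : Pt n → Pt n := fun x => if h : ∃ t ∈ T, g x ∈ ball t (1/2) then h.choose else 0 with hf
  apply Finset.card_le_card_of_injOn f
  · intro x hx
    have h := hgZ x hx
    simp only [hf, dif_pos h]
    exact hTfin.mem_toFinset.2 h.choose_spec.1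
  · intro x hx y hy hxy
    by_contra hne
    have hx' := hgZ x hx
    have hy' := hgZ y hy
    have hxb : g x ∈ ball (f x) (1/2) := by simp only [hf, dif_pos hx']; exact hx'.choose_spec.2
    have hyb : g y ∈ ball (f y) (1/2) := by simp only [hf, dif_pos hy']; exact hy'.choose_spec.2
    rw [← hxy] at hyb
    have hlt : dist (g x) (g y) < 1 := by
      calc dist (g x) (g y) ≤ dist (g x) (f x) + dist (g y) (f x) :=
            dist_triangle_right _ _ _
        _ < 1/2 + 1/2 := add_lt_add (mem_ball.1 hxb) (mem_ball.1 hyb)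
        _ = 1 := by norm_num
    have hgt : 1 < dist (g x) (g y) := by
      rw [hdistg]
      have := hZsep x hx y hy hne
      rw [show (1:ℝ) = ρ⁻¹ * ρ by field_simp]
      exact mul_lt_mul_of_pos_left this (by positivity)
    linarith

/-- Existence of a maximal `2δ`-separated subset. -/
lemma exists_maximal_separated (S : Set (Pt n)) {δ : ℝ} (hδ : 0 < δ) :
    ∃ Z ⊆ S, (Z.Pairwise fun a b => 2*δ < dist a b) ∧ ∀ y ∈ S, ∃ z ∈ Z, dist y z ≤ 2*δ := by
  have hub : ∀ c ⊆ {Z | Z ⊆ S ∧ Z.Pairwise fun a b => 2*δ < dist a b},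
      IsChain (· ⊆ ·) c → ∃ ub ∈ {Z | Z ⊆ S ∧ Z.Pairwise fun a b => 2*δ < dist a b},
        ∀ s ∈ c, s ⊆ ub := by
    intro c hcsub hchain
    refine ⟨⋃₀ c, ⟨?_, ?_⟩, fun s hs => subset_sUnion_of_mem hs⟩
    · exact sUnion_subset fun s hs => (hcsub hs).1
    · intro a ha b hb hab
      obtain ⟨s, hs, has⟩ := ha
      obtain ⟨t, ht, hbt⟩ := hb
      rcases hchain.total hs ht with h | h
      · exact (hcsub ht).2 (h has) hbt hab
      · exact (hcsub hs).2 has (h hbt) hab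
  obtain ⟨m, hm⟩ := zorn_subset {Z | Z ⊆ S ∧ Z.Pairwise fun a b => 2*δ < dist a b} hub
  · refine ⟨m, hm.prop.1, hm.prop.2, ?_⟩
    intro y hy
    by_contra hcon
    push_neg at hcon
    have hym : y ∉ m := by
      intro hym
      have := hcon y hym
      rw [dist_self] at this
      linarith
    have hins : insert y m ∈ {Z | Z ⊆ S ∧ Z.Pairwise fun a b => 2*δ < dist a b} := by
      constructor
      · exact insert_subset hy hm.prop.1
      · refine (Set.pairwise_insert).2
          ⟨hm.prop.2, fun z hz _ => ⟨hcon z hz, by rw [dist_comm]; exact hcon z hz⟩⟩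
    have := hm.2 hins (subset_insert y m)
    exact hym (this (mem_insert y m))

/-- Separated finsets give lower bounds on the packing number. -/
lemma card_le_packingNumber {F : Set (Pt n)} {δ : ℝ} (Z : Finset (Pt n)) (hZF : ↑Z ⊆ F)
    (hsep : (Z : Set (Pt n)).Pairwise fun a b => 2*δ < dist a b) :
    (Z.card : ℕ∞) ≤ packingNumber F δ := by
  have hdisj : (Z : Set (Pt n)).PairwiseDisjoint fun x => closedBall x δ := by
    intro a ha b hb hab
    exact closedBall_disjoint_closedBall (by have := hsep ha hb hab; linarith)
  exact le_iSup₂_of_le Z hZF (le_iSup_of_le hdisj le_rfl)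

lemma packingNumber_lt_top {F : Set (Pt n)} (hF : F ⊆ closedBall 0 1) {δ : ℝ} (hδ : 0 < δ) :
    packingNumber F δ < ⊤ := by
  obtain ⟨M, hM⟩ := card_sep_in_ball (n := n) ((1+δ)/δ)
  have : packingNumber F δ ≤ (M : ℕ∞) := by
    refine iSup₂_le fun Z hZF => iSup_le fun hdisj => ?_
    have hsep : ∀ x ∈ Z, ∀ y ∈ Z, x ≠ y → δ < dist x y := by
      intro x hx y hy hxy
      by_contra hle
      push_neg at hle
      have := hdisj (x := x) (y := y) hx hy hxy
      exact (Set.not_disjoint_iff.2 ⟨y, mem_closedBall.2 (by rwa [dist_comm]),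
        mem_closedBall.2 (by simp [hδ.le])⟩) this
    have := hM δ hδ 0 Z (fun x hx => by
      have : dist x 0 ≤ 1 := by simpa [dist_zero_right] using mem_closedBall.1 (hF (hZF hx))
      calc dist x 0 ≤ 1 := this
        _ ≤ (1+δ)/δ * δ := by field_simp; linarith) hsep
    exact_mod_cast this
  exact lt_of_le_of_lt this (WithTop.coe_lt_top M)


/-- Maximal packing net: any `T ⊆ F` (`F` bounded) has a finite `2δ`-net which is a packing. -/
lemma exists_packing_net {F : Set (Pt n)} (hF : F ⊆ closedBall 0 1) {δ : ℝ} (hδ : 0 < δ)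
    (T : Set (Pt n)) (hT : T ⊆ F) :
    ∃ Z : Finset (Pt n), ↑Z ⊆ T ∧ Z.card ≤ (packingNumber F δ).toNat ∧
      ∀ y ∈ T, ∃ z ∈ Z, dist y z ≤ 2*δ := by
  obtain ⟨Z₀, hZ₀T, hZ₀sep, hZ₀cov⟩ := exists_maximal_separated T hδ
  have hcard : ∀ W : Finset (Pt n), ↑W ⊆ Z₀ → W.card ≤ (packingNumber F δ).toNat := by
    intro W hW
    have h1 : (W.card : ℕ∞) ≤ packingNumber F δ :=
      card_le_packingNumber W (fun x hx => hT (hZ₀T (hW hx))) (hZ₀sep.mono hW)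
    have h2 := packingNumber_lt_top hF hδ
    simpa using ENat.toNat_le_toNat h1 h2.ne
  have hfin : Z₀.Finite := by
    by_contra hinf
    obtain ⟨W, hWsub, hWcard⟩ :=
      Set.Infinite.exists_subset_card_eq hinf ((packingNumber F δ).toNat + 1)
    have := hcard W hWsub
    omega
  refine ⟨hfin.toFinset, by simpa using hZ₀T, hcard _ (by simp), ?_⟩
  intro y hy
  obtain ⟨z, hz, h⟩ := hZ₀cov y hy
  exact ⟨z, hfin.mem_toFinset.2 hz, h⟩

lemma count_le_rpow {N : ℕ} {δ t : ℝ} (hδ0 : 0 < δ) (hδ1 : δ < 1) (ht : 0 < t)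
    (h : ENNReal.ofReal (Real.log N / (-Real.log δ)) < ENNReal.ofReal t) :
    (N : ℝ) ≤ δ ^ (-t) := by
  have hlog : 0 < -Real.log δ := by have := Real.log_neg hδ0 hδ1; linarith
  have hratio : Real.log N / (-Real.log δ) < t := by
    by_contra hle
    push_neg at hle
    exact absurd h (not_lt.2 (ENNReal.ofReal_le_ofReal hle))
  have hlt : Real.log N < t * (-Real.log δ) := (div_lt_iff₀ hlog).1 hratio
  rcases Nat.eq_zero_or_pos N with h0 | hpos
  · subst h0; simpa using Real.rpow_nonneg hδ0.le _
  · have hN : (0:ℝ) < N := by exact_mod_cast hpos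
    rw [(Real.exp_log hN).symm, Real.rpow_def_of_pos hδ0]
    apply le_of_lt
    apply Real.exp_lt_exp.2
    nlinarith [hlt]

lemma exists_level {a : ℝ} (h0 : 0 < a) (h1 : a ≤ 1) :
    ∃ k : ℕ, a ≤ (2:ℝ)⁻¹ ^ k ∧ (2:ℝ)⁻¹ ^ (k+1) < a := by
  classical
  have hex : ∃ k, (2:ℝ)⁻¹ ^ (k+1) < a := by
    obtain ⟨m, hm⟩ := exists_pow_lt_of_lt_one h0 (by norm_num : (2:ℝ)⁻¹ < 1)
    exact ⟨m, lt_of_le_of_lt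
      (pow_le_pow_of_le_one (by norm_num) (by norm_num) (Nat.le_succ m)) hm⟩
  refine ⟨Nat.find hex, ?_, Nat.find_spec hex⟩
  rcases Nat.eq_zero_or_pos (Nat.find hex) with h0' | hpos
  · rw [h0']; simpa using h1
  · obtain ⟨j, hj⟩ := Nat.exists_eq_succ_of_ne_zero hpos.ne'
    have := Nat.find_min hex (m := j) (by omega)
    push_neg at this
    rw [hj]
    simpa [Nat.succ_eq_add_one] using this

lemma sep_dist {E : Set (Pt n)} {c₁ : ℝ}
    (hs : ∀ x ∈ E, closedBall x (c₁ * (1 - ‖x‖)) ∩ E = {x}) :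
    ∀ x ∈ E, ∀ y ∈ E, y ≠ x → c₁ * (1 - ‖x‖) < dist x y := by
  intro x hx y hy hne
  by_contra hle
  push_neg at hle
  have : y ∈ closedBall x (c₁ * (1 - ‖x‖)) ∩ E := ⟨mem_closedBall.2 (by rwa [dist_comm]), hy⟩
  rw [hs x hx] at this
  exact hne this

lemma countable_of_separated {E : Set (Pt n)} (hE : E ⊆ ball 0 1) {c₁ : ℝ} (hc₁ : 0 < c₁)
    (hd : ∀ x ∈ E, ∀ y ∈ E, y ≠ x → c₁ * (1 - ‖x‖) < dist x y) : E.Countable := by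
  have hpos : ∀ x ∈ E, 0 < 1 - ‖x‖ := by
    intro x hx
    have := mem_ball_zero_iff.1 (hE hx)
    linarith
  apply Set.PairwiseDisjoint.countable_of_isOpen
    (s := fun x : Pt n => ball x (c₁ * (1 - ‖x‖) / 2))
  · intro x hx y hy hxy
    apply ball_disjoint_ball
    have h1 := hd x hx y hy (fun h => hxy h.symm)
    have h2 := hd y hy x hx hxy
    rw [dist_comm] at h2
    linarith
  · exact fun x _ => isOpen_ball
  · intro x hx
    exact nonempty_ball.2 (by have := hpos x hx; positivity)

lemma ediam_closedBall_le {x : Pt n} {r : ℝ} :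
    EMetric.diam (closedBall x r) ≤ ENNReal.ofReal (2*r) := by
  apply EMetric.diam_le
  intro y hy z hz
  rw [edist_dist]
  apply ENNReal.ofReal_le_ofReal
  calc dist y z ≤ dist y x + dist z x := dist_triangle_right _ _ _
    _ ≤ r + r := add_le_add (mem_closedBall.1 hy) (mem_closedBall.1 hz)
    _ = 2*r := by ring


lemma exists_net_of_card_bound {T : Set (Pt n)} {δ : ℝ} (hδ : 0 < δ) {m : ℕ}
    (hcardb : ∀ W : Finset (Pt n), ↑W ⊆ T →
      ((W : Set (Pt n)).Pairwise fun a b => 2*δ < dist a b) → W.card ≤ m) :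
    ∃ Z : Finset (Pt n), ↑Z ⊆ T ∧ Z.card ≤ m ∧ ∀ y ∈ T, ∃ z ∈ Z, dist y z ≤ 2*δ := by
  obtain ⟨Z₀, hZ₀T, hZ₀sep, hZ₀cov⟩ := exists_maximal_separated T hδ
  have hcard : ∀ W : Finset (Pt n), ↑W ⊆ Z₀ → W.card ≤ m :=
    fun W hW => hcardb W (fun x hx => hZ₀T (hW hx)) (hZ₀sep.mono hW)
  have hfin : Z₀.Finite := by
    by_contra hinf
    obtain ⟨W, hWsub, hWcard⟩ := Set.Infinite.exists_subset_card_eq hinf (m + 1)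
    have := hcard W hWsub
    omega
  refine ⟨hfin.toFinset, by simpa using hZ₀T, hcard _ (by simp), ?_⟩
  intro y hy
  obtain ⟨z, hz, h⟩ := hZ₀cov y hy
  exact ⟨z, hfin.mem_toFinset.2 hz, h⟩

/-- Key counting estimate: the number of points of `E` at scale `δ` is bounded by
`M` times any bound for packings of the limit set at scale `δ`. -/
lemma level_card_bound {E : Set (Pt n)} (hE : E ⊆ ball 0 1)
    {c₁ c₂ : ℝ} (hc₁ : 0 < c₁) (hc₂ : 1 ≤ c₂)
    (hdist : ∀ x ∈ E, ∀ y ∈ E, y ≠ x → c₁ * (1 - ‖x‖) < dist x y)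
    (hwa : ∀ x ∈ E, ∃ z ∈ limitSet E, dist x z ≤ c₂ * (1 - ‖x‖))
    (M : ℕ)
    (hM : ∀ ρ : ℝ, 0 < ρ → ∀ (w : Pt n) (Z : Finset (Pt n)),
      (∀ x ∈ Z, dist x w ≤ ((c₂+2)*2/c₁) * ρ) → (∀ x ∈ Z, ∀ y ∈ Z, x ≠ y → ρ < dist x y) →
      Z.card ≤ M)
    {δ B : ℝ} (hδ : 0 < δ) (hB : 0 ≤ B)
    (hpack : ∀ Z : Finset (Pt n), ↑Z ⊆ limitSet E →
      ((Z : Set (Pt n)).Pairwise fun a b => 2*δ < dist a b) → (Z.card : ℝ) ≤ B)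
    (T : Finset (Pt n)) (hTE : ↑T ⊆ E) (hT1 : ∀ x ∈ T, 1 - ‖x‖ ≤ δ)
    (hT2 : ∀ x ∈ T, δ / 2 < 1 - ‖x‖) :
    (T.card : ℝ) ≤ M * B := by
  classical
  set zfun : Pt n → Pt n := fun x =>
    if h : ∃ z ∈ limitSet E, dist x z ≤ c₂ * (1 - ‖x‖) then h.choose else 0 with hzfun
  have hz : ∀ x ∈ E, zfun x ∈ limitSet E ∧ dist x (zfun x) ≤ c₂ * (1 - ‖x‖) := by
    intro x hx
    have h := hwa x hx
    simp only [hzfun, dif_pos h]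
    exact h.choose_spec
  -- net in the image of `zfun`
  obtain ⟨Z, hZsub, hZcard, hZcov⟩ := exists_net_of_card_bound (T := zfun '' ↑T) hδ
    (m := ⌊B⌋₊) (fun W hW hWsep => Nat.le_floor (hpack W
      (fun w hw => by
        obtain ⟨x, hxT, rfl⟩ := hW hw
        exact (hz x (hTE hxT)).1) hWsep))
  set ζ : Pt n → Pt n := fun x => if h : ∃ z ∈ Z, dist (zfun x) z ≤ 2*δ then h.choose else 0
    with hζ
  have hζmem : ∀ x ∈ T, ζ x ∈ Z ∧ dist x (ζ x) ≤ (c₂ + 2) * δ := by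
    intro x hxT
    have hximg : zfun x ∈ zfun '' ↑T := ⟨x, hxT, rfl⟩
    have h : ∃ z ∈ Z, dist (zfun x) z ≤ 2*δ := by
      obtain ⟨z, hz1, hz2⟩ := hZcov _ hximg
      exact ⟨z, hz1, hz2⟩
    simp only [hζ, dif_pos h]
    refine ⟨h.choose_spec.1, ?_⟩
    have h1 := (hz x (hTE hxT)).2
    have h2 := h.choose_spec.2
    have h3 : 1 - ‖x‖ ≤ δ := hT1 x hxT
    calc dist x h.choose ≤ dist x (zfun x) + dist (zfun x) h.choose := dist_triangle _ _ _
      _ ≤ c₂ * (1 - ‖x‖) + 2*δ := add_le_add h1 h2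
      _ ≤ c₂ * δ + 2*δ := by nlinarith
      _ = (c₂ + 2) * δ := by ring
  have hmain : T.card ≤ M * (T.image ζ).card := by
    apply Finset.card_le_mul_card_image
    intro a ha
    apply hM (c₁ * δ / 2) (by positivity) a
    · intro x hx
      simp only [Finset.mem_filter] at hx
      have := (hζmem x hx.1).2
      rw [hx.2] at this
      calc dist x a ≤ (c₂ + 2) * δ := this
        _ = (c₂+2)*2/c₁ * (c₁ * δ / 2) := by field_simp
    · intro x hx y hy hxy
      simp only [Finset.mem_filter] at hx hy
      have h1 := hdist x (hTE hx.1) y (hTE hy.1) (fun h => hxy h.symm)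
      have h2 := hT2 x hx.1
      nlinarith
  have himg : (T.image ζ).card ≤ Z.card := by
    apply Finset.card_le_card
    intro a ha
    obtain ⟨x, hxT, rfl⟩ := Finset.mem_image.1 ha
    exact (hζmem x hxT).1
  calc (T.card : ℝ) ≤ (M : ℝ) * ((T.image ζ).card : ℝ) := by exact_mod_cast hmain
    _ ≤ (M : ℝ) * ((Z.card : ℝ)) := by
        apply mul_le_mul_of_nonneg_left _ (by positivity)
        exact_mod_cast himg
    _ ≤ (M : ℝ) * B := by
        apply mul_le_mul_of_nonneg_left _ (by positivity)
        calc (Z.card : ℝ) ≤ (⌊B⌋₊ : ℝ) := by exact_mod_cast hZcard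
          _ ≤ B := Nat.floor_le hB


lemma limitSet_subset_closedBall {E : Set (Pt n)} (hE : E ⊆ ball 0 1) :
    limitSet E ⊆ closedBall 0 1 :=
  fun z hz => closure_minimal (hE.trans ball_subset_closedBall) Metric.isClosed_closedBall hz.1

lemma tsum_subtype_le_card_mul {A : Set (Pt n)} (hA : A.Finite) (g : Pt n → ℝ≥0∞) (c : ℝ≥0∞)
    (hg : ∀ x ∈ A, g x ≤ c) : ∑' x : ↥A, g ↑x ≤ (hA.toFinset.card : ℝ≥0∞) * c := by
  letI := hA.fintype
  rw [tsum_fintype]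
  calc ∑ x : ↥A, g ↑x ≤ Finset.univ.card • c :=
        Finset.sum_le_card_nsmul _ _ _ (fun x _ => hg ↑x x.2)
    _ = (Fintype.card ↥A : ℝ≥0∞) * c := by rw [Finset.card_univ, nsmul_eq_mul]
    _ = (hA.toFinset.card : ℝ≥0∞) * c := by rw [Set.Finite.card_toFinset]

lemma accSeries_lt_top_of_upperBoxDim_lt {E : Set (Pt n)} (hE : E ⊆ ball 0 1)
    (hsep : SeparatedSet E) (hwa : WellApproximated E) {t s : ℝ≥0}
    (h1 : upperBoxDim (limitSet E) < (t : ℝ≥0∞)) (h2 : (t:ℝ) < (s:ℝ)) :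
    accSeries E (s:ℝ) < ⊤ := by
  classical
  obtain ⟨c₁, hc₁0, hc₁1, hsepP⟩ := hsep
  obtain ⟨c₂, hc₂, hwaP⟩ := hwa
  have hdist := sep_dist hsepP
  have hL := limitSet_subset_closedBall hE
  have hposE : ∀ x ∈ E, 0 < 1 - ‖x‖ := fun x hx => by
    have := mem_ball_zero_iff.1 (hE hx); linarith
  have htne : t ≠ 0 := by rintro rfl; simpa using h1
  have ht0 : (0:ℝ) < t := lt_of_le_of_ne t.coe_nonneg (by exact_mod_cast htne.symm)
  -- eventual counting bound from the limsup hypothesis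
  have hev : ∀ᶠ δ in nhdsWithin 0 (Ioi 0), ENNReal.ofReal
      (Real.log ((packingNumber (limitSet E) δ).toNat : ℝ) / (-Real.log δ)) < (t:ℝ≥0∞) :=
    Filter.eventually_lt_of_limsup_lt h1
  obtain ⟨u, hu, hIoc⟩ := mem_nhdsGT_iff_exists_Ioc_subset.1 hev
  set u' : ℝ := min u (1/2) with hu'def
  have hu'0 : 0 < u' := lt_min hu (by norm_num)
  have hu'half : u' ≤ 1/2 := min_le_right _ _
  have key : ∀ δ : ℝ, 0 < δ → δ ≤ u' →
      (((packingNumber (limitSet E) δ).toNat : ℝ)) ≤ δ ^ (-(t:ℝ)) := by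
    intro δ hδ0 hδu
    have hmem : δ ∈ Ioc (0:ℝ) u := ⟨hδ0, hδu.trans (min_le_left _ _)⟩
    have := hIoc hmem
    rw [← ENNReal.ofReal_coe_nnreal] at this
    exact count_le_rpow hδ0 (by linarith [hu'half]) ht0 this
  obtain ⟨M, hM⟩ := card_sep_in_ball (n := n) ((c₂+2)*2/c₁)
  -- dyadic levels
  set S : ℕ → Set (Pt n) := fun k =>
    {x | x ∈ E ∧ 1 - ‖x‖ ≤ (2:ℝ)⁻¹^k ∧ (2:ℝ)⁻¹^(k+1) < 1 - ‖x‖} with hS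
  have h2pow : ∀ k : ℕ, (0:ℝ) < (2:ℝ)⁻¹^k := fun k => by positivity
  have Sfin : ∀ k, (S k).Finite := by
    intro k
    obtain ⟨Mk, hMk⟩ := card_sep_in_ball (n := n) ((2:ℝ)^(k+1) / c₁)
    by_contra hinf
    obtain ⟨W, hWsub, hWcard⟩ := Set.Infinite.exists_subset_card_eq hinf (Mk+1)
    have hc : W.card ≤ Mk := by
      apply hMk (c₁ * (2:ℝ)⁻¹^(k+1)) (by positivity) 0
      · intro x hx
        have hxS := hWsub hx
        have hx1 : ‖x‖ < 1 := mem_ball_zero_iff.1 (hE hxS.1)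
        have heq : (2:ℝ)^(k+1) / c₁ * (c₁ * (2:ℝ)⁻¹^(k+1)) = 1 := by
          rw [div_mul_eq_mul_div, mul_comm c₁ ((2:ℝ)⁻¹^(k+1)), ← mul_assoc, mul_div_assoc,
            div_self hc₁0.ne', mul_one, ← mul_pow]
          norm_num
        rw [dist_zero_right, heq]
        exact hx1.le
      · intro x hx y hy hxy
        have hxS := hWsub hx
        have hyS := hWsub hy
        have hd := hdist x hxS.1 y hyS.1 (fun h => hxy h.symm)
        have := hxS.2.2
        nlinarith
    omega
  -- cardinality bound at small levels
  have hcardk : ∀ k : ℕ, (2:ℝ)⁻¹^k ≤ u' →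
      (((Sfin k).toFinset.card : ℝ)) ≤ (M:ℝ) * ((2:ℝ)⁻¹^k) ^ (-(t:ℝ)) := by
    intro k hk
    apply level_card_bound hE hc₁0 hc₂ hdist hwaP M hM (δ := (2:ℝ)⁻¹^k) (h2pow k)
      (Real.rpow_nonneg (h2pow k).le _)
    · intro Z hZL hZsep
      have hp1 : (Z.card : ℕ∞) ≤ packingNumber (limitSet E) ((2:ℝ)⁻¹^k) :=
        card_le_packingNumber Z hZL hZsep
      have hp2 := packingNumber_lt_top hL (h2pow k)
      have hp3 : Z.card ≤ (packingNumber (limitSet E) ((2:ℝ)⁻¹^k)).toNat := by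
        simpa using ENat.toNat_le_toNat hp1 hp2.ne
      calc (Z.card : ℝ) ≤ ((packingNumber (limitSet E) ((2:ℝ)⁻¹^k)).toNat : ℝ) := by
            exact_mod_cast hp3
        _ ≤ ((2:ℝ)⁻¹^k) ^ (-(t:ℝ)) := key _ (h2pow k) hk
    · intro x hx
      exact ((Sfin k).mem_toFinset.1 hx).1
    · intro x hx
      exact ((Sfin k).mem_toFinset.1 hx).2.1
    · intro x hx
      have := ((Sfin k).mem_toFinset.1 hx).2.2
      calc (2:ℝ)⁻¹^k / 2 = (2:ℝ)⁻¹^(k+1) := by rw [pow_succ]; ring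
        _ < 1 - ‖x‖ := this
  -- injection of `E` into the levels
  have hposE' : ∀ x : ↥E, 0 < 1 - ‖(x : Pt n)‖ := fun x => hposE ↑x x.2
  have hle1 : ∀ x : ↥E, 1 - ‖(x : Pt n)‖ ≤ 1 := fun x => by
    have := norm_nonneg (x : Pt n); linarith
  set lvl : ↥E → ℕ := fun x => (exists_level (hposE' x) (hle1 x)).choose with hlvl
  have hlvlspec : ∀ x : ↥E, (↑x : Pt n) ∈ S (lvl x) := fun x =>
    ⟨x.2, (exists_level (hposE' x) (hle1 x)).choose_spec.1,
      (exists_level (hposE' x) (hle1 x)).choose_spec.2⟩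
  set j : ↥E → Σ k : ℕ, ↥(S k) := fun x => ⟨lvl x, ⟨↑x, hlvlspec x⟩⟩ with hj
  have hjinj : Function.Injective j := by
    intro a b hab
    have : (↑a : Pt n) = ↑b := by
      have := congrArg (fun p : Σ k : ℕ, ↥(S k) => (p.2 : Pt n)) hab
      simpa using this
    exact Subtype.ext this
  set g : ℕ → ℝ≥0∞ := fun k => ∑' x : ↥(S k), ENNReal.ofReal ((1 - ‖(x : Pt n)‖) ^ (s:ℝ))
    with hg
  have hle : accSeries E (s:ℝ) ≤ ∑' k : ℕ, g k := by
    have := ENNReal.tsum_comp_le_tsum_of_injective hjinj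
      (fun p : Σ k : ℕ, ↥(S k) => ENNReal.ofReal ((1 - ‖(p.2 : Pt n)‖) ^ (s:ℝ)))
    refine le_trans (le_of_eq rfl) (this.trans ?_)
    rw [ENNReal.tsum_sigma']
  -- per-level bound
  have hlevel : ∀ k : ℕ, g k ≤
      ((Sfin k).toFinset.card : ℝ≥0∞) * ENNReal.ofReal (((2:ℝ)⁻¹^k) ^ (s:ℝ)) := by
    intro k
    refine le_trans (le_of_eq rfl) (tsum_subtype_le_card_mul (Sfin k)
      (fun y => ENNReal.ofReal ((1 - ‖y‖) ^ (s:ℝ))) _ ?_)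
    intro x hx
    apply ENNReal.ofReal_le_ofReal
    have hx0 : 0 ≤ 1 - ‖x‖ := (hposE x hx.1).le
    exact Real.rpow_le_rpow hx0 hx.2.1 s.coe_nonneg
  -- geometric bound
  set r : ℝ≥0∞ := ENNReal.ofReal ((2:ℝ)⁻¹ ^ ((s:ℝ) - (t:ℝ))) with hr
  have hrlt1 : r < 1 := by
    rw [hr]
    apply ENNReal.ofReal_lt_one.2
    exact Real.rpow_lt_one (by norm_num) (by norm_num) (by linarith)
  obtain ⟨k₀, hk₀⟩ := exists_pow_lt_of_lt_one hu'0 (by norm_num : (2:ℝ)⁻¹ < 1)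
  have hk₀' : ∀ k, k₀ ≤ k → (2:ℝ)⁻¹^k ≤ u' := by
    intro k hk
    calc (2:ℝ)⁻¹^k ≤ (2:ℝ)⁻¹^k₀ := pow_le_pow_of_le_one (by norm_num) (by norm_num) hk
      _ ≤ u' := hk₀.le
  have hgeom : ∀ k, k₀ ≤ k → g k ≤ ENNReal.ofReal (M:ℝ) * r ^ k := by
    intro k hk
    refine (hlevel k).trans ?_
    have hc := hcardk k (hk₀' k hk)
    have hcnn : ((Sfin k).toFinset.card : ℝ≥0∞) =
        ENNReal.ofReal ((Sfin k).toFinset.card : ℝ) := by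
      rw [ENNReal.ofReal_natCast]
    rw [hcnn, ← ENNReal.ofReal_mul (Nat.cast_nonneg _)]
    have harith : (((Sfin k).toFinset.card : ℝ)) * (((2:ℝ)⁻¹^k) ^ (s:ℝ))
        ≤ (M:ℝ) * ((2:ℝ)⁻¹ ^ ((s:ℝ) - (t:ℝ)))^k := by
      have h1 : (((2:ℝ)⁻¹^k) ^ (s:ℝ)) ≥ 0 := Real.rpow_nonneg (h2pow k).le _
      have h3 : (((Sfin k).toFinset.card : ℝ)) * (((2:ℝ)⁻¹^k) ^ (s:ℝ))
          ≤ ((M:ℝ) * ((2:ℝ)⁻¹^k) ^ (-(t:ℝ))) * (((2:ℝ)⁻¹^k) ^ (s:ℝ)) :=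
        mul_le_mul_of_nonneg_right hc h1
      refine h3.trans (le_of_eq ?_)
      rw [mul_assoc, ← Real.rpow_add (h2pow k)]
      congr 1
      rw [← Real.rpow_natCast ((2:ℝ)⁻¹ ^ ((s:ℝ) - (t:ℝ))) k, ← Real.rpow_mul (by norm_num),
        ← Real.rpow_natCast ((2:ℝ)⁻¹) k, ← Real.rpow_mul (by norm_num)]
      congr 1
      ring
    calc ENNReal.ofReal ((((Sfin k).toFinset.card : ℝ)) * (((2:ℝ)⁻¹^k) ^ (s:ℝ)))
        ≤ ENNReal.ofReal ((M:ℝ) * ((2:ℝ)⁻¹ ^ ((s:ℝ) - (t:ℝ)))^k) :=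
          ENNReal.ofReal_le_ofReal harith
      _ = ENNReal.ofReal (M:ℝ) * r ^ k := by
          rw [ENNReal.ofReal_mul (by positivity), ENNReal.ofReal_pow (by positivity)]
  -- assemble
  have hsplit : ∀ k : ℕ, g k ≤ (if k < k₀ then g k else 0) + ENNReal.ofReal (M:ℝ) * r ^ k := by
    intro k
    by_cases hk : k < k₀
    · simp only [if_pos hk]
      exact le_add_right le_rfl
    · simp only [if_neg hk]
      rw [zero_add]
      exact hgeom k (not_lt.1 hk)
  have hgfin : ∀ k, g k < ⊤ := by
    intro k
    refine lt_of_le_of_lt (hlevel k) ?_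
    exact ENNReal.mul_lt_top (ENNReal.natCast_lt_top _) ENNReal.ofReal_lt_top
  calc accSeries E (s:ℝ) ≤ ∑' k : ℕ, g k := hle
    _ ≤ ∑' k : ℕ, ((if k < k₀ then g k else 0) + ENNReal.ofReal (M:ℝ) * r ^ k) :=
        ENNReal.tsum_le_tsum hsplit
    _ = (∑' k : ℕ, (if k < k₀ then g k else 0)) + ∑' k : ℕ, ENNReal.ofReal (M:ℝ) * r ^ k :=
        ENNReal.tsum_add
    _ < ⊤ := by
        apply ENNReal.add_lt_top.2
        constructor
        · have : (∑' k : ℕ, (if k < k₀ then g k else 0)) =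
              ∑ k ∈ Finset.range k₀, (if k < k₀ then g k else 0) := by
            apply tsum_eq_sum
            intro k hk
            rw [if_neg (by simpa using hk)]
          rw [this]
          apply ENNReal.sum_lt_top.2
          intro k _
          split
          · exact hgfin k
          · simp
        · rw [ENNReal.tsum_mul_left, ENNReal.tsum_geometric]
          apply ENNReal.mul_lt_top ENNReal.ofReal_lt_top
          rw [ENNReal.inv_lt_top]
          exact tsub_pos_of_lt hrlt1


lemma critExp_le_upperBoxDim {E : Set (Pt n)} (hE : E ⊆ ball 0 1)
    (hsep : SeparatedSet E) (hwa : WellApproximated E) :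
    critExp E ≤ upperBoxDim (limitSet E) := by
  by_contra hlt
  push_neg at hlt
  obtain ⟨t, ht1, ht2⟩ := ENNReal.lt_iff_exists_nnreal_btwn.1 hlt
  obtain ⟨s', hs1, hs2⟩ := ENNReal.lt_iff_exists_nnreal_btwn.1 ht2
  have hts : (t:ℝ) < (s':ℝ) := by exact_mod_cast hs1
  have hacc : accSeries E (s':ℝ) < ⊤ :=
    accSeries_lt_top_of_upperBoxDim_lt hE hsep hwa ht1 hts
  have hle : critExp E ≤ (s' : ℝ≥0∞) := iInf₂_le s' hacc
  exact absurd (hle.trans_lt hs2) (lt_irrefl _)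

lemma pow_rpow_comm {a : ℝ} (ha : 0 ≤ a) (j : ℕ) (b : ℝ) : (a ^ j) ^ b = (a ^ b) ^ j := by
  rw [← Real.rpow_natCast a j, ← Real.rpow_mul ha, mul_comm, Real.rpow_mul ha, Real.rpow_natCast]

lemma tendsto_ofReal_geom {ρ : ℝ} (h0 : 0 ≤ ρ) (h1 : ρ < 1) (K : ℝ) :
    Tendsto (fun j : ℕ => ENNReal.ofReal (K * ρ ^ j)) atTop (𝓝 0) := by
  have h := tendsto_pow_atTop_nhds_zero_of_lt_one h0 h1
  have h2 : Tendsto (fun j : ℕ => K * ρ ^ j) atTop (𝓝 (K * 0)) := h.const_mul K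
  rw [mul_zero] at h2
  simpa using ENNReal.tendsto_ofReal h2

lemma dimH_le_lowerBoxDim {E : Set (Pt n)} (hE : E ⊆ ball 0 1) :
    dimH (limitSet E) ≤ lowerBoxDim (limitSet E) := by
  classical
  by_contra hlt
  push_neg at hlt
  obtain ⟨s, hs1, hs2⟩ := ENNReal.lt_iff_exists_nnreal_btwn.1 hlt
  obtain ⟨t, ht1, ht2⟩ := ENNReal.lt_iff_exists_nnreal_btwn.1 hs1
  have hts : (t:ℝ) < (s:ℝ) := by exact_mod_cast ht2
  have htne : t ≠ 0 := by rintro rfl; simpa using ht1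
  have ht0 : (0:ℝ) < t := lt_of_le_of_ne t.coe_nonneg (by exact_mod_cast htne.symm)
  have hL := limitSet_subset_closedBall hE
  -- frequently small packing numbers
  have hfreq : ∃ᶠ δ in nhdsWithin 0 (Ioi 0), ENNReal.ofReal
      (Real.log ((packingNumber (limitSet E) δ).toNat : ℝ) / (-Real.log δ)) < (t:ℝ≥0∞) :=
    Filter.frequently_lt_of_liminf_lt (h := ht1)
  have hsel : ∀ j : ℕ, ∃ δ : ℝ, δ ∈ Ioo (0:ℝ) ((2:ℝ)⁻¹^(j+1)) ∧ ENNReal.ofReal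
      (Real.log ((packingNumber (limitSet E) δ).toNat : ℝ) / (-Real.log δ)) < (t:ℝ≥0∞) := by
    intro j
    have hu : (0:ℝ) < (2:ℝ)⁻¹^(j+1) := by positivity
    have hmem : ∀ᶠ δ in nhdsWithin (0:ℝ) (Ioi 0), δ ∈ Ioo (0:ℝ) ((2:ℝ)⁻¹^(j+1)) :=
      eventually_mem_set.2 (Ioo_mem_nhdsGT hu)
    obtain ⟨δ, h1, h2⟩ := (hfreq.and_eventually hmem).exists
    exact ⟨δ, h2, h1⟩
  choose δf hδf1 hδf2 using hsel
  have hδ0 : ∀ j, 0 < δf j := fun j => (hδf1 j).1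
  have hδu : ∀ j, δf j < (2:ℝ)⁻¹^(j+1) := fun j => (hδf1 j).2
  have hδ1 : ∀ j, δf j < 1 := fun j => lt_of_lt_of_le (hδu j)
    (by calc (2:ℝ)⁻¹^(j+1) ≤ (2:ℝ)⁻¹^(0+1) :=
          pow_le_pow_of_le_one (by norm_num) (by norm_num) (by omega)
      _ ≤ 1 := by norm_num)
  have hN : ∀ j, (((packingNumber (limitSet E) (δf j)).toNat : ℝ)) ≤ (δf j) ^ (-(t:ℝ)) :=
    fun j => count_le_rpow (hδ0 j) (hδ1 j) ht0 (by
      have := hδf2 j; rwa [← ENNReal.ofReal_coe_nnreal] at this)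
  -- maximal packings give covers
  have hnet := fun j => exists_packing_net hL (hδ0 j) (limitSet E) subset_rfl
  choose Zf hZsub hZcard hZcov using hnet
  -- apply the Hausdorff measure cover bound
  have hμ : μH[(s:ℝ)] (limitSet E) ≤ liminf (fun j : ℕ =>
      ∑' z : ↥(Zf j), EMetric.diam (closedBall (↑z : Pt n) (2 * δf j)) ^ (s:ℝ)) atTop := by
    apply MeasureTheory.Measure.hausdorffMeasure_le_liminf_tsum (s:ℝ) (limitSet E)
      (fun j => ENNReal.ofReal (4 * δf j)) ?_ _ ?_ ?_
    · -- r → 0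
      have hsq : Tendsto (fun j : ℕ => 4 * δf j) atTop (𝓝 0) := by
        apply squeeze_zero (fun j => mul_nonneg (by norm_num) (hδ0 j).le)
          (g := fun j : ℕ => (4 * (2:ℝ)⁻¹) * (2:ℝ)⁻¹^j)
        · intro j
          have := (hδu j).le
          calc 4 * δf j ≤ 4 * (2:ℝ)⁻¹^(j+1) := by nlinarith [hδ0 j]
            _ = 4 * (2:ℝ)⁻¹ * (2:ℝ)⁻¹^j := by rw [pow_succ]; ring
        · simpa using (tendsto_pow_atTop_nhds_zero_of_lt_one
            (by norm_num : (0:ℝ) ≤ 2⁻¹) (by norm_num)).const_mul (4 * (2:ℝ)⁻¹)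
      simpa using ENNReal.tendsto_ofReal hsq
    · -- diam bounds
      apply Filter.Eventually.of_forall
      intro j z
      refine le_trans ediam_closedBall_le (ENNReal.ofReal_le_ofReal (le_of_eq (by ring)))
    · -- covers
      apply Filter.Eventually.of_forall
      intro j y hy
      obtain ⟨z, hz, hdz⟩ := hZcov j y hy
      exact mem_iUnion.2 ⟨⟨z, hz⟩, mem_closedBall.2 hdz⟩
  -- bound the sums
  have hsum : ∀ j : ℕ, (∑' z : ↥(Zf j), EMetric.diam (closedBall (↑z : Pt n) (2 * δf j)) ^ (s:ℝ))
      ≤ ENNReal.ofReal (((4:ℝ)^(s:ℝ)) * (((2:ℝ)⁻¹^((s:ℝ)-(t:ℝ)))^(j+1))) := by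
    intro j
    have hterm : ∀ z : ↥(Zf j), EMetric.diam (closedBall (↑z : Pt n) (2 * δf j)) ^ (s:ℝ)
        ≤ ENNReal.ofReal ((4 * δf j) ^ (s:ℝ)) := by
      intro z
      calc EMetric.diam (closedBall (↑z : Pt n) (2 * δf j)) ^ (s:ℝ)
          ≤ (ENNReal.ofReal (2 * (2 * δf j))) ^ (s:ℝ) :=
            ENNReal.rpow_le_rpow ediam_closedBall_le s.coe_nonneg
        _ = ENNReal.ofReal ((4 * δf j) ^ (s:ℝ)) := by
            have h44 : 2*(2*δf j) = 4 * δf j := by ring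
            rw [h44, ENNReal.ofReal_rpow_of_nonneg (by nlinarith [hδ0 j]) s.coe_nonneg]
    rw [tsum_fintype]
    calc ∑ z : ↥(Zf j), EMetric.diam (closedBall (↑z : Pt n) (2 * δf j)) ^ (s:ℝ)
        ≤ Finset.univ.card • ENNReal.ofReal ((4 * δf j) ^ (s:ℝ)) :=
          Finset.sum_le_card_nsmul _ _ _ (fun z _ => hterm z)
      _ = ((Zf j).card : ℝ≥0∞) * ENNReal.ofReal ((4 * δf j) ^ (s:ℝ)) := by
          rw [Finset.card_univ, Fintype.card_coe, nsmul_eq_mul]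
      _ ≤ ENNReal.ofReal ((δf j) ^ (-(t:ℝ))) * ENNReal.ofReal ((4 * δf j) ^ (s:ℝ)) := by
          apply mul_le_mul_of_nonneg_right _ zero_le
          rw [← ENNReal.ofReal_natCast ((Zf j).card)]
          apply ENNReal.ofReal_le_ofReal
          calc ((Zf j).card : ℝ) ≤ ((packingNumber (limitSet E) (δf j)).toNat : ℝ) := by
                exact_mod_cast hZcard j
            _ ≤ (δf j) ^ (-(t:ℝ)) := hN j
      _ ≤ ENNReal.ofReal (((4:ℝ)^(s:ℝ)) * (((2:ℝ)⁻¹^((s:ℝ)-(t:ℝ)))^(j+1))) := by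
          rw [← ENNReal.ofReal_mul (Real.rpow_nonneg (hδ0 j).le _)]
          apply ENNReal.ofReal_le_ofReal
          have e1 : (4 * δf j) ^ (s:ℝ) = (4:ℝ)^(s:ℝ) * (δf j)^(s:ℝ) :=
            Real.mul_rpow (by norm_num) (hδ0 j).le
          rw [e1, ← mul_assoc, mul_comm ((δf j) ^ (-(t:ℝ))) ((4:ℝ)^(s:ℝ)), mul_assoc,
            ← Real.rpow_add (hδ0 j)]
          have hexp : -(t:ℝ) + (s:ℝ) = (s:ℝ) - (t:ℝ) := by ring
          rw [hexp]
          apply mul_le_mul_of_nonneg_left _ (Real.rpow_nonneg (by norm_num) _)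
          rw [← pow_rpow_comm (by norm_num : (0:ℝ) ≤ 2⁻¹) (j+1) ((s:ℝ)-(t:ℝ))]
          apply Real.rpow_le_rpow (hδ0 j).le (hδu j).le
          linarith
  have hlim : liminf (fun j : ℕ =>
      ∑' z : ↥(Zf j), EMetric.diam (closedBall (↑z : Pt n) (2 * δf j)) ^ (s:ℝ)) atTop = 0 := by
    have hbd : Tendsto (fun j : ℕ =>
        ENNReal.ofReal (((4:ℝ)^(s:ℝ)) * (((2:ℝ)⁻¹^((s:ℝ)-(t:ℝ)))^(j+1)))) atTop (𝓝 0) := by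
      have h0ρ : (0:ℝ) ≤ (2:ℝ)⁻¹^((s:ℝ)-(t:ℝ)) := Real.rpow_nonneg (by norm_num) _
      have h1ρ : (2:ℝ)⁻¹^((s:ℝ)-(t:ℝ)) < 1 :=
        Real.rpow_lt_one (by norm_num) (by norm_num) (by linarith)
      have := tendsto_ofReal_geom h0ρ h1ρ ((4:ℝ)^(s:ℝ) * (2:ℝ)⁻¹^((s:ℝ)-(t:ℝ)))
      refine this.congr (fun j => ?_)
      congr 1
      rw [pow_succ]
      ring
    apply le_antisymm _ zero_le
    calc liminf _ atTop ≤ liminf (fun j : ℕ =>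
        ENNReal.ofReal (((4:ℝ)^(s:ℝ)) * (((2:ℝ)⁻¹^((s:ℝ)-(t:ℝ)))^(j+1)))) atTop :=
          liminf_le_liminf (Filter.Eventually.of_forall hsum)
      _ = 0 := hbd.liminf_eq
  have hμ0 : μH[(s:ℝ)] (limitSet E) = 0 := le_antisymm (hμ.trans (le_of_eq hlim)) zero_le
  have hdim : dimH (limitSet E) ≤ (s:ℝ≥0∞) :=
    dimH_le_of_hausdorffMeasure_ne_top (by rw [hμ0]; exact ENNReal.zero_ne_top)
  exact absurd hs2 (not_lt.2 hdim)


lemma radialPoints_subset_limitSet {E : Set (Pt n)} (hE : E ⊆ ball 0 1) {c : ℝ} (hc : 1 ≤ c) :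
    radialPoints E c ⊆ limitSet E := by
  intro z hz
  obtain ⟨hz1, hz2⟩ := hz
  have hc0 : (0:ℝ) < c := by linarith
  constructor
  · rw [Metric.mem_closure_iff]
    intro ε hε
    obtain ⟨x, hxE, hd1, hd2⟩ := hz2 (ε/(2*c)) (by positivity)
    refine ⟨x, hxE, ?_⟩
    rw [dist_comm]
    calc dist x z ≤ c * (1-‖x‖) := hd1
      _ ≤ c * (ε/(2*c)) := hd2
      _ = ε/2 := by field_simp
      _ < ε := by linarith
  · intro hzE
    have := mem_ball_zero_iff.1 (hE hzE)
    rw [hz1] at this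
    exact lt_irrefl _ this

lemma radialPoints_mono {E : Set (Pt n)} (hE : E ⊆ ball 0 1) {c c' : ℝ} (hc : 1 ≤ c)
    (hcc' : c ≤ c') : radialPoints E c ⊆ radialPoints E c' := by
  intro z hz
  have hc0 : (0:ℝ) < c := by linarith
  refine ⟨hz.1, fun r hr => ?_⟩
  obtain ⟨x, hxE, h1, h2⟩ := hz.2 r hr
  have hx1 : 0 < 1 - ‖x‖ := by have := mem_ball_zero_iff.1 (hE hxE); linarith
  have hrx : 1 - ‖x‖ ≤ r := (mul_le_mul_iff_right₀ hc0).1 h2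
  refine ⟨x, hxE, ?_, ?_⟩
  · calc dist x z ≤ c * (1-‖x‖) := h1
      _ ≤ c' * (1-‖x‖) := mul_le_mul_of_nonneg_right hcc' hx1.le
  · exact mul_le_mul_of_nonneg_left hrx (by linarith)

lemma radialLimitSet_subset_iUnion {E : Set (Pt n)} (hE : E ⊆ ball 0 1) :
    radialLimitSet E ⊆ ⋃ m : ℕ, radialPoints E ((m:ℝ)+1) := by
  intro z hz
  obtain ⟨c, hc, hzc⟩ := mem_iUnion₂.1 hz
  refine mem_iUnion.2 ⟨⌈c⌉₊, radialPoints_mono hE hc ?_ hzc⟩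
  calc c ≤ (⌈c⌉₊ : ℝ) := Nat.le_ceil c
    _ ≤ (⌈c⌉₊ : ℝ) + 1 := by linarith

lemma tail_small {E : Set (Pt n)} (hE : E ⊆ ball 0 1) {s : ℝ≥0}
    (hacc : accSeries E (s:ℝ) ≠ ⊤) {ε : ℝ≥0∞} (hε : 0 < ε) {v : ℝ} (hv : 0 < v) :
    ∃ r : ℝ, 0 < r ∧ r ≤ v ∧ ∑' x : ↥E,
      (if 1 - ‖(x:Pt n)‖ ≤ r then ENNReal.ofReal ((1 - ‖(x:Pt n)‖) ^ (s:ℝ)) else 0) ≤ ε := by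
  classical
  set f : ↥E → ℝ≥0∞ := fun x => ENNReal.ofReal ((1 - ‖(x:Pt n)‖) ^ (s:ℝ)) with hf
  have htend := ENNReal.tendsto_tsum_compl_atTop_zero (f := f) hacc
  obtain ⟨F, hF⟩ := (htend.eventually (gt_mem_nhds hε)).exists
  have main : ∀ r : ℝ, (∀ x ∈ F, ¬(1 - ‖(x:Pt n)‖ ≤ r)) →
      ∑' x : ↥E, (if 1 - ‖(x:Pt n)‖ ≤ r then f x else 0) ≤ ε := by
    intro r hrF
    have hsupp : Function.support (fun x : ↥E => if 1 - ‖(x:Pt n)‖ ≤ r then f x else 0)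
        ⊆ {x : ↥E | x ∉ F} := by
      intro x hx
      simp only [Function.mem_support] at hx
      intro hxF
      rw [if_neg (hrF x hxF)] at hx
      exact hx rfl
    calc ∑' x : ↥E, (if 1 - ‖(x:Pt n)‖ ≤ r then f x else 0)
        = ∑' x : {x : ↥E | x ∉ F}, (if 1 - ‖((x:↥E):Pt n)‖ ≤ r then f ↑x else 0) :=
          (tsum_subtype_eq_of_support_subset hsupp).symm
      _ ≤ ∑' x : {x : ↥E | x ∉ F}, f ↑x := ENNReal.tsum_le_tsum (fun x => by
          split <;> simp)
      _ ≤ ε := hF.le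
  rcases F.eq_empty_or_nonempty with hFe | hFne
  · exact ⟨v, hv, le_rfl, main v (by simp [hFe])⟩
  · obtain ⟨x₀, hx₀F, hx₀min⟩ := F.exists_min_image (fun x => 1 - ‖(x:Pt n)‖) hFne
    have hx₀pos : 0 < 1 - ‖(x₀:Pt n)‖ := by
      have := mem_ball_zero_iff.1 (hE x₀.2); linarith
    refine ⟨min v ((1 - ‖(x₀:Pt n)‖)/2), lt_min hv (by linarith), min_le_left _ _, ?_⟩
    apply main
    intro x hxF
    have h1 := hx₀min x hxF
    push_neg
    calc min v ((1 - ‖(x₀:Pt n)‖)/2) ≤ (1 - ‖(x₀:Pt n)‖)/2 := min_le_right _ _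
      _ < 1 - ‖(x₀:Pt n)‖ := by linarith
      _ ≤ 1 - ‖(x:Pt n)‖ := h1

lemma dimH_radialPoints_le {E : Set (Pt n)} (hE : E ⊆ ball 0 1) (hcE : E.Countable)
    {c : ℝ} (hc : 1 ≤ c) {s : ℝ≥0} (hs0 : 0 < (s:ℝ)) (hacc : accSeries E (s:ℝ) < ⊤) :
    dimH (radialPoints E c) ≤ (s : ℝ≥0∞) := by
  classical
  have hc0 : (0:ℝ) < c := by linarith
  haveI := hcE.to_subtype
  have hposE : ∀ x : ↥E, 0 < 1 - ‖(x:Pt n)‖ := fun x => by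
    have := mem_ball_zero_iff.1 (hE x.2); linarith
  set K : ℝ≥0∞ := ENNReal.ofReal ((2*c) ^ (s:ℝ)) with hK
  have hKtop : K ≠ ⊤ := ENNReal.ofReal_ne_top
  have hsel : ∀ j : ℕ, ∃ r : ℝ, 0 < r ∧ r ≤ ((j:ℝ)+1)⁻¹ ∧ ∑' x : ↥E,
      (if 1 - ‖(x:Pt n)‖ ≤ r then ENNReal.ofReal ((1 - ‖(x:Pt n)‖) ^ (s:ℝ)) else 0)
      ≤ (2:ℝ≥0∞)⁻¹ ^ j * (K+1)⁻¹ := by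
    intro j
    refine tail_small hE hacc.ne (ε := (2:ℝ≥0∞)⁻¹ ^ j * (K+1)⁻¹) (v := ((j:ℝ)+1)⁻¹)
      ?_ (by positivity)
    apply ENNReal.mul_pos_iff.2
    refine ⟨pos_iff_ne_zero.2 (pow_ne_zero j ?_), ENNReal.inv_pos.2 (by simp [hKtop])⟩
    simp
  choose rf hr0 hrv hrtail using hsel
  set tco : ℕ → ↥E → Set (Pt n) := fun j x =>
    if 1 - ‖(x:Pt n)‖ ≤ rf j then closedBall (x:Pt n) (c*(1 - ‖(x:Pt n)‖)) else ∅ with htco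
  have hμ : μH[(s:ℝ)] (radialPoints E c) ≤ liminf (fun j : ℕ =>
      ∑' x : ↥E, EMetric.diam (tco j x) ^ (s:ℝ)) atTop := by
    apply MeasureTheory.Measure.hausdorffMeasure_le_liminf_tsum (s:ℝ) _
      (fun j => ENNReal.ofReal (2*c*rf j)) ?_ _ ?_ ?_
    · have hsq : Tendsto (fun j : ℕ => 2*c*rf j) atTop (𝓝 0) := by
        apply squeeze_zero (fun j => mul_nonneg (mul_nonneg (by norm_num) hc0.le) (hr0 j).le)
          (g := fun j : ℕ => 2*c*((j:ℝ)+1)⁻¹)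
        · intro j
          have := hrv j
          nlinarith [hr0 j]
        · have h0 : Tendsto (fun j : ℕ => ((j:ℝ)+1)⁻¹) atTop (𝓝 0) := by
            simpa only [one_div] using tendsto_one_div_add_atTop_nhds_zero_nat (𝕜 := ℝ)
          simpa using h0.const_mul (2*c)
      simpa using ENNReal.tendsto_ofReal hsq
    · apply Filter.Eventually.of_forall
      intro j x
      by_cases hcond : 1 - ‖(x:Pt n)‖ ≤ rf j
      · simp only [htco, if_pos hcond]
        refine le_trans ediam_closedBall_le (ENNReal.ofReal_le_ofReal ?_)
        have := hposE x
        nlinarith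
      · simp only [htco]
        rw [if_neg hcond]
        simp
    · apply Filter.Eventually.of_forall
      intro j z hz
      obtain ⟨x, hxE, h1, h2⟩ := hz.2 (rf j) (hr0 j)
      have hcond : 1 - ‖x‖ ≤ rf j := (mul_le_mul_iff_right₀ hc0).1 h2
      apply mem_iUnion.2 ⟨⟨x, hxE⟩, ?_⟩
      simp only [htco, if_pos hcond]
      exact mem_closedBall.2 (by rw [dist_comm]; exact h1)
  have hsum : ∀ j : ℕ, (∑' x : ↥E, EMetric.diam (tco j x) ^ (s:ℝ)) ≤ (2:ℝ≥0∞)⁻¹ ^ j := by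
    intro j
    have hterm : ∀ x : ↥E, EMetric.diam (tco j x) ^ (s:ℝ) ≤
        K * (if 1 - ‖(x:Pt n)‖ ≤ rf j then ENNReal.ofReal ((1 - ‖(x:Pt n)‖) ^ (s:ℝ)) else 0) := by
      intro x
      by_cases hcond : 1 - ‖(x:Pt n)‖ ≤ rf j
      · simp only [htco, if_pos hcond]
        have hx := (hposE x).le
        calc EMetric.diam (closedBall (x:Pt n) (c*(1 - ‖(x:Pt n)‖))) ^ (s:ℝ)
            ≤ (ENNReal.ofReal (2*(c*(1 - ‖(x:Pt n)‖)))) ^ (s:ℝ) :=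
              ENNReal.rpow_le_rpow ediam_closedBall_le s.coe_nonneg
          _ = ENNReal.ofReal ((2*c*(1 - ‖(x:Pt n)‖)) ^ (s:ℝ)) := by
              rw [show 2*(c*(1 - ‖(x:Pt n)‖)) = 2*c*(1 - ‖(x:Pt n)‖) by ring,
                ENNReal.ofReal_rpow_of_nonneg (by nlinarith) s.coe_nonneg]
          _ = K * ENNReal.ofReal ((1 - ‖(x:Pt n)‖) ^ (s:ℝ)) := by
              rw [hK, ← ENNReal.ofReal_mul (Real.rpow_nonneg (by nlinarith) _),
                ← Real.mul_rpow (by nlinarith) hx]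
      · simp only [htco]
        rw [if_neg hcond, show EMetric.diam (∅ : Set (Pt n)) = 0 from Metric.ediam_empty, ENNReal.zero_rpow_of_pos hs0]
        exact zero_le
    calc ∑' x : ↥E, EMetric.diam (tco j x) ^ (s:ℝ)
        ≤ ∑' x : ↥E, K * (if 1 - ‖(x:Pt n)‖ ≤ rf j then
            ENNReal.ofReal ((1 - ‖(x:Pt n)‖) ^ (s:ℝ)) else 0) := ENNReal.tsum_le_tsum hterm
      _ = K * ∑' x : ↥E, (if 1 - ‖(x:Pt n)‖ ≤ rf j then
            ENNReal.ofReal ((1 - ‖(x:Pt n)‖) ^ (s:ℝ)) else 0) := ENNReal.tsum_mul_left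
      _ ≤ K * ((2:ℝ≥0∞)⁻¹ ^ j * (K+1)⁻¹) := mul_le_mul_of_nonneg_left (hrtail j) zero_le
      _ = (2:ℝ≥0∞)⁻¹ ^ j * (K * (K+1)⁻¹) := by ring
      _ ≤ (2:ℝ≥0∞)⁻¹ ^ j * 1 := by
          apply mul_le_mul_of_nonneg_left _ zero_le
          calc K * (K+1)⁻¹ ≤ (K+1) * (K+1)⁻¹ :=
                mul_le_mul_of_nonneg_right (le_add_right le_rfl) zero_le
            _ = 1 := ENNReal.mul_inv_cancel (by simp) (by simp [hKtop])
      _ = (2:ℝ≥0∞)⁻¹ ^ j := mul_one _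
  have hμ0 : μH[(s:ℝ)] (radialPoints E c) = 0 := by
    apply le_antisymm _ zero_le
    calc μH[(s:ℝ)] (radialPoints E c) ≤ liminf (fun j : ℕ =>
        ∑' x : ↥E, EMetric.diam (tco j x) ^ (s:ℝ)) atTop := hμ
      _ ≤ liminf (fun j : ℕ => (2:ℝ≥0∞)⁻¹ ^ j) atTop :=
          liminf_le_liminf (Filter.Eventually.of_forall hsum)
      _ = 0 := (ENNReal.tendsto_pow_atTop_nhds_zero_of_lt_one
          (by simp [ENNReal.inv_lt_one])).liminf_eq
  exact dimH_le_of_hausdorffMeasure_ne_top (by rw [hμ0]; exact ENNReal.zero_ne_top)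

lemma dimH_radialLimitSet_le_critExp {E : Set (Pt n)} (hE : E ⊆ ball 0 1) (hcE : E.Countable) :
    dimH (radialLimitSet E) ≤ critExp E := by
  apply le_iInf₂
  intro s hs
  rcases eq_or_lt_of_le s.coe_nonneg with hs0 | hs0
  · -- s = 0 : E is finite, so the limit set is empty
    haveI := hcE.to_subtype
    have hEfin : E.Finite := by
      rw [← Set.not_infinite]
      intro hinf
      haveI : Infinite ↥E := hinf.to_subtype
      have : accSeries E ((s:ℝ≥0) : ℝ) = ⊤ := by
        rw [accSeries]
        calc ∑' x : ↥E, ENNReal.ofReal ((1 - ‖(x:Pt n)‖) ^ (s:ℝ))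
            = ∑' _ : ↥E, (1:ℝ≥0∞) := by
              apply tsum_congr
              intro x
              rw [← hs0, Real.rpow_zero, ENNReal.ofReal_one]
          _ = ⊤ := ENNReal.tsum_const_eq_top_of_ne_zero one_ne_zero
      exact absurd (this ▸ hs) (lt_irrefl _)
    have hlim : limitSet E = ∅ := by
      rw [limitSet, hEfin.isClosed.closure_eq, diff_self]
    have hrad : radialLimitSet E = ∅ := by
      apply eq_empty_of_subset_empty
      intro z hz
      obtain ⟨c, hc, hzc⟩ := mem_iUnion₂.1 hz
      rw [← hlim]
      exact radialPoints_subset_limitSet hE hc hzc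
    rw [hrad, dimH_empty]
    exact zero_le
  · have hsub := radialLimitSet_subset_iUnion hE
    calc dimH (radialLimitSet E) ≤ dimH (⋃ m : ℕ, radialPoints E ((m:ℝ)+1)) := dimH_mono hsub
      _ = ⨆ m : ℕ, dimH (radialPoints E ((m:ℝ)+1)) := dimH_iUnion _
      _ ≤ (s : ℝ≥0∞) := iSup_le fun m => dimH_radialPoints_le hE hcE
          (by have : (0:ℝ) ≤ (m:ℝ) := Nat.cast_nonneg m; linarith) hs0 hs

end Dproof

/-- **Corollary: if `dim_H L_rad(E) = upper box dim L(E)` then Hausdorff and box dimensions of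
`L(E)` exist and equal the critical exponent `δ(E)`.** -/
theorem dimH_eq_boxDim_eq_critExp {n : ℕ} (hn : 1 ≤ n)
    (E : Set (Pt n)) (hE : E ⊆ ball 0 1)
    (hdisc : IsDiscreteSet E) (hsep : SeparatedSet E) (hwa : WellApproximated E)
    (hreg : dimH (radialLimitSet E) = upperBoxDim (limitSet E)) :
    dimH (limitSet E) = critExp E ∧
      lowerBoxDim (limitSet E) = critExp E ∧
      upperBoxDim (limitSet E) = critExp E := by
  obtain ⟨c₁, hc₁0, hc₁1, hsepP⟩ := hsep
  have hdist := Dproof.sep_dist hsepP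
  have hcE := Dproof.countable_of_separated hE hc₁0 hdist
  have hradsub : radialLimitSet E ⊆ limitSet E := by
    intro z hz
    obtain ⟨c, hc, hzc⟩ := mem_iUnion₂.1 hz
    exact Dproof.radialPoints_subset_limitSet hE hc hzc
  have h1 : dimH (radialLimitSet E) ≤ dimH (limitSet E) := dimH_mono hradsub
  have h2 : dimH (limitSet E) ≤ lowerBoxDim (limitSet E) := Dproof.dimH_le_lowerBoxDim hE
  have h3 : lowerBoxDim (limitSet E) ≤ upperBoxDim (limitSet E) := Filter.liminf_le_limsup
  have h5 : dimH (radialLimitSet E) ≤ critExp E := Dproof.dimH_radialLimitSet_le_critExp hE hcE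
  have h6 : critExp E ≤ upperBoxDim (limitSet E) :=
    Dproof.critExp_le_upperBoxDim hE ⟨c₁, hc₁0, hc₁1, hsepP⟩ hwa
  have hup1 : upperBoxDim (limitSet E) ≤ dimH (limitSet E) := by rw [← hreg]; exact h1
  have e1 : dimH (limitSet E) = upperBoxDim (limitSet E) := le_antisymm (h2.trans h3) hup1
  have e2 : lowerBoxDim (limitSet E) = upperBoxDim (limitSet E) :=
    le_antisymm h3 (hup1.trans h2)
  have e3 : critExp E = upperBoxDim (limitSet E) := by
    refine le_antisymm h6 ?_
    rw [← hreg]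
    exact h5
  exact ⟨e1.trans e3.symm, e2.trans e3.symm, e3.symm⟩

end
end

section
/- Let n ≥ 1 and let X ⊆ S^{n-1} be non-empty and closed. Then there exists a discrete set E ⊆ 𝔻ⁿ which is separated and well-approximated, with L(E) = X and δ(E) = upper box dimension of X; moreover every separated and well-approximated discrete E ⊆ 𝔻ⁿ with L(E) = X satisfies δ(E) ≤ upper box dimension of X. Consequently, the upper box dimension of X equals the maximum of δ(E) over all separated and well-approximated discrete E ⊆ 𝔻ⁿ with L(E) = X. -/
open Metric Set Filter
open scoped ENNReal NNReal

noncomputable section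

section Aux
open MeasureTheory
variable {n : ℕ}

lemma two_mul_lt_dist {x y : Pt n} {δ : ℝ} (hδ : 0 ≤ δ) (hxy : x ≠ y)
    (h : Disjoint (closedBall x δ) (closedBall y δ)) : 2 * δ < dist x y := by
  by_contra hle
  push_neg at hle
  have h2 : ‖(2:ℝ)‖ = 2 := by norm_num
  have h1 : midpoint ℝ x y ∈ closedBall x δ := by
    rw [mem_closedBall, dist_comm, dist_left_midpoint (𝕜 := ℝ), h2]
    rw [dist_comm] at hle ⊢
    linarith [dist_nonneg (x := x) (y := y)]
  have h1' : midpoint ℝ x y ∈ closedBall y δ := by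
    rw [mem_closedBall, dist_midpoint_right (𝕜 := ℝ), h2]
    linarith [dist_nonneg (x := x) (y := y)]
  exact Set.disjoint_left.mp h h1 h1'

lemma card_le_of_separated (c : Pt n) {R r : ℝ} (hr : 0 < r) (hR : 0 ≤ R)
    (Z : Finset (Pt n)) (hZc : ↑Z ⊆ closedBall c R)
    (hsep : ∀ x ∈ Z, ∀ y ∈ Z, x ≠ y → r < dist x y) :
    (Z.card : ℝ) ≤ ((2 * R + r) / r) ^ n := by
  classical
  set μ : Measure (Pt n) := volume with hμ
  have hdisj : (↑Z : Set (Pt n)).PairwiseDisjoint fun x => closedBall x (r/2) := by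
    intro x hx y hy hxy
    exact closedBall_disjoint_closedBall (by linarith [hsep x hx y hy hxy])
  have hsum : μ (⋃ x ∈ Z, closedBall x (r/2)) = ∑ x ∈ Z, μ (closedBall x (r/2)) :=
    measure_biUnion_finset hdisj (fun b _ => measurableSet_closedBall)
  have hball : ∀ x : Pt n, μ (closedBall x (r/2)) = ENNReal.ofReal ((r/2) ^ n) * μ (ball 0 1) := by
    intro x
    rw [Measure.addHaar_closedBall μ x (by linarith), finrank_euclideanSpace_fin]
  have hsub : (⋃ x ∈ Z, closedBall x (r/2)) ⊆ closedBall c (R + r/2) := by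
    intro y hy
    simp only [mem_iUnion] at hy
    obtain ⟨x, hx, hy⟩ := hy
    have hxc : dist x c ≤ R := hZc hx
    have ht := dist_triangle y x c
    rw [mem_closedBall] at hy ⊢
    linarith
  have hbig : μ (closedBall c (R + r/2)) = ENNReal.ofReal ((R + r/2) ^ n) * μ (ball 0 1) := by
    rw [Measure.addHaar_closedBall μ c (by linarith), finrank_euclideanSpace_fin]
  have key : (Z.card : ℝ≥0∞) * (ENNReal.ofReal ((r/2)^n) * μ (ball 0 1))
      ≤ ENNReal.ofReal ((R + r/2)^n) * μ (ball 0 1) := by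
    rw [← hbig]
    refine le_trans (le_of_eq ?_) ((measure_mono hsub).trans_eq' hsum)
    rw [Finset.sum_congr rfl (fun x _ => hball x), Finset.sum_const, nsmul_eq_mul]
  have hBpos : 0 < μ (ball 0 1) := measure_ball_pos μ 0 one_pos
  have hBtop : μ (ball 0 1) < ⊤ := measure_ball_lt_top
  have key2 : (Z.card : ℝ≥0∞) * ENNReal.ofReal ((r/2)^n) ≤ ENNReal.ofReal ((R + r/2)^n) := by
    refine (ENNReal.mul_le_mul_iff_left hBpos.ne' hBtop.ne).mp ?_
    rw [mul_assoc]; exact key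
  have key3 : (Z.card : ℝ) * ((r/2)^n) ≤ (R + r/2)^n := by
    have h1 : ENNReal.ofReal ((Z.card : ℝ) * ((r/2)^n)) ≤ ENNReal.ofReal ((R + r/2)^n) := by
      rw [ENNReal.ofReal_mul (by positivity)]
      simpa [ENNReal.ofReal_natCast] using key2
    exact (ENNReal.ofReal_le_ofReal_iff (by positivity)).mp h1
  have hrn : (0:ℝ) < (r/2)^n := by positivity
  have : (Z.card : ℝ) ≤ (R + r/2)^n / ((r/2)^n) := by
    rw [le_div_iff₀ hrn]; exact key3
  refine this.trans (le_of_eq ?_)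
  rw [← div_pow]
  congr 1
  field_simp

lemma le_packingNumber {F : Set (Pt n)} {δ : ℝ} (Z : Finset (Pt n)) (hZF : ↑Z ⊆ F)
    (hd : (↑Z : Set (Pt n)).PairwiseDisjoint fun x => closedBall x δ) :
    (Z.card : ℕ∞) ≤ packingNumber F δ := by
  unfold _root_.packingNumber
  exact le_iSup_of_le Z (le_iSup_of_le hZF (le_iSup_of_le hd le_rfl))

lemma packing_card_le {F : Set (Pt n)} (hF : F ⊆ closedBall 0 1) {δ : ℝ} (hδ : 0 < δ)
    (Z : Finset (Pt n)) (hZF : ↑Z ⊆ F)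
    (hd : (↑Z : Set (Pt n)).PairwiseDisjoint fun x => closedBall x δ) :
    (Z.card : ℝ) ≤ ((2 * 1 + 2 * δ) / (2 * δ)) ^ n := by
  refine card_le_of_separated 0 (by positivity) zero_le_one Z (hZF.trans hF) ?_
  intro x hx y hy hxy
  have := two_mul_lt_dist hδ.le hxy (hd hx hy hxy)
  linarith

lemma packingNumber_le_bound {F : Set (Pt n)} (hF : F ⊆ closedBall 0 1) {δ : ℝ} (hδ : 0 < δ) :
    packingNumber F δ ≤ (⌈((2 * 1 + 2 * δ) / (2 * δ)) ^ n⌉₊ : ℕ∞) := by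
  unfold _root_.packingNumber
  refine iSup_le fun Z => iSup_le fun hZF => iSup_le fun hd => ?_
  have h := packing_card_le hF hδ Z hZF hd
  have h2 : Z.card ≤ ⌈((2 * 1 + 2 * δ) / (2 * δ)) ^ n⌉₊ := by
    have := h.trans (Nat.le_ceil _)
    exact_mod_cast this
  exact_mod_cast h2

lemma packingNumber_ne_top {F : Set (Pt n)} (hF : F ⊆ closedBall 0 1) {δ : ℝ} (hδ : 0 < δ) :
    packingNumber F δ ≠ ⊤ :=
  fun h => by simpa [h] using packingNumber_le_bound hF hδ

lemma one_le_packingNumber {F : Set (Pt n)} (hFne : F.Nonempty) (δ : ℝ) :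
    1 ≤ packingNumber F δ := by
  obtain ⟨x, hx⟩ := hFne
  have := le_packingNumber (F := F) (δ := δ) {x} (by simpa using hx)
    (by simp [Set.pairwiseDisjoint_singleton])
  simpa using this

lemma packingNumber_anti {F : Set (Pt n)} {δ₁ δ₂ : ℝ} (h : δ₁ ≤ δ₂) :
    packingNumber F δ₂ ≤ packingNumber F δ₁ := by
  unfold _root_.packingNumber
  refine iSup_le fun Z => iSup_le fun hZF => iSup_le fun hd => ?_
  refine le_packingNumber Z hZF ?_
  intro x hx y hy hxy
  exact (hd hx hy hxy).mono (closedBall_subset_closedBall h) (closedBall_subset_closedBall h)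

lemma exists_maximal_packing {F : Set (Pt n)} (hF : F ⊆ closedBall 0 1) (hFne : F.Nonempty)
    {δ : ℝ} (hδ : 0 < δ) :
    ∃ Z : Finset (Pt n), ↑Z ⊆ F ∧ ((↑Z : Set (Pt n)).PairwiseDisjoint fun x => closedBall x δ) ∧
      (Z.card : ℕ∞) = packingNumber F δ ∧ 1 ≤ Z.card ∧
      ∀ w ∈ F, ∃ z ∈ Z, dist w z ≤ 2 * δ := by
  classical
  set S : Set ℕ := {k : ℕ | ∃ Z : Finset (Pt n), ↑Z ⊆ F ∧
    ((↑Z : Set (Pt n)).PairwiseDisjoint fun x => closedBall x δ) ∧ Z.card = k} with hS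
  have hS0 : (0 : ℕ) ∈ S := ⟨∅, by simp, by simp, rfl⟩
  have hSbdd : BddAbove S := by
    refine ⟨⌈((2 * 1 + 2 * δ) / (2 * δ)) ^ n⌉₊, ?_⟩
    rintro k ⟨Z, hZF, hd, rfl⟩
    have := (packing_card_le hF hδ Z hZF hd).trans (Nat.le_ceil _)
    exact_mod_cast this
  obtain ⟨Z, hZF, hd, hcard⟩ := Nat.sSup_mem ⟨0, hS0⟩ hSbdd
  refine ⟨Z, hZF, hd, ?_, ?_, ?_⟩
  · -- card = packingNumber
    refine le_antisymm (le_packingNumber Z hZF hd) ?_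
    unfold _root_.packingNumber
    refine iSup_le fun W => iSup_le fun hWF => iSup_le fun hdW => ?_
    have : W.card ∈ S := ⟨W, hWF, hdW, rfl⟩
    have : W.card ≤ Z.card := hcard ▸ le_csSup hSbdd this
    exact_mod_cast this
  · -- 1 ≤ card
    obtain ⟨x, hx⟩ := hFne
    have h1 : (1 : ℕ) ∈ S := ⟨{x}, by simpa using hx, by simp [Set.pairwiseDisjoint_singleton], by simp⟩
    have := le_csSup hSbdd h1
    omega
  · -- net property
    intro w hw
    by_contra hcon
    push_neg at hcon
    have hwZ : w ∉ Z := fun hwZ => by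
      have := hcon w hwZ
      simp at this
      linarith
    have hins : ((insert w Z : Finset (Pt n)) : Set (Pt n)).PairwiseDisjoint
        fun x => closedBall x δ := by
      rw [Finset.coe_insert]
      refine hd.insert ?_
      intro z hz hne
      have h2 : 2 * δ < dist w z := hcon z hz
      exact closedBall_disjoint_closedBall (by linarith)
    have hmem : (insert w Z).card ∈ S := ⟨insert w Z, by
      rw [Finset.coe_insert]; exact Set.insert_subset hw hZF, hins, rfl⟩
    have hle := le_csSup hSbdd hmem
    rw [Finset.card_insert_of_notMem hwZ, hcard] at hle
    omega



/-- dyadic scale -/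
def sc (k : ℕ) : ℝ := ((2:ℝ) ^ k)⁻¹

lemma sc_pos (k : ℕ) : 0 < sc k := by rw [sc]; positivity

lemma sc_le_one (k : ℕ) : sc k ≤ 1 := by
  rw [sc, inv_le_one_iff₀]
  right; exact one_le_pow₀ (by norm_num)

lemma sc_anti {k l : ℕ} (h : k ≤ l) : sc l ≤ sc k := by
  rw [sc, sc, inv_le_inv₀ (by positivity) (by positivity)]
  exact pow_le_pow_right₀ (by norm_num) h

lemma log_sc (k : ℕ) : Real.log (sc k) = -(k * Real.log 2) := by
  rw [sc, Real.log_inv, Real.log_pow]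

lemma sc_succ (k : ℕ) : sc (k + 1) = sc k / 2 := by
  rw [sc, sc, pow_succ]
  field_simp

lemma sc_lt_one {k : ℕ} (h : 1 ≤ k) : sc k < 1 := by
  rw [sc, inv_lt_one_iff₀]
  right; exact one_lt_pow₀ (by norm_num) (by omega)

lemma exists_sc_le {u : ℝ} (hu : 0 < u) : ∃ K : ℕ, 1 ≤ K ∧ sc K ≤ u := by
  obtain ⟨K, hK⟩ := pow_unbounded_of_one_lt (R := ℝ) u⁻¹ (by norm_num : (1:ℝ) < 2)
  refine ⟨K + 1, le_add_self, ?_⟩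
  rw [sc, inv_le_comm₀ (by positivity) hu]
  exact (hK.trans_le (pow_le_pow_right₀ (by norm_num) (by omega))).le

/-- the dyadic level of `δ` -/
def lv (δ : ℝ) : ℕ := ⌊(-Real.log δ) / Real.log 2⌋₊

lemma log2_pos : (0:ℝ) < Real.log 2 := Real.log_pos (by norm_num)

lemma le_sc_iff {δ : ℝ} (h0 : 0 < δ) (k : ℕ) : δ ≤ sc k ↔ (k : ℝ) ≤ (-Real.log δ) / Real.log 2 := by
  rw [← Real.log_le_log_iff h0 (sc_pos k), log_sc, le_div_iff₀ log2_pos]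
  constructor <;> intro h <;> linarith

lemma le_lv {δ : ℝ} {K : ℕ} (h0 : 0 < δ) (h : δ ≤ sc K) : K ≤ lv δ :=
  Nat.le_floor (((le_sc_iff h0 K).mp h))

lemma le_sc_lv {δ : ℝ} (h0 : 0 < δ) (h1 : δ ≤ 1) : δ ≤ sc (lv δ) := by
  rw [le_sc_iff h0]
  refine Nat.floor_le ?_
  have : Real.log δ ≤ 0 := Real.log_nonpos h0.le h1
  exact div_nonneg (by linarith) log2_pos.le

lemma sc_lv_succ_le {δ : ℝ} (h0 : 0 < δ) : sc (lv δ + 1) ≤ δ := by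
  unfold lv
  have h := Nat.lt_floor_add_one ((-Real.log δ) / Real.log 2)
  rw [div_lt_iff₀ log2_pos] at h
  rw [← Real.log_le_log_iff (sc_pos _) h0, log_sc]
  push_cast
  push_cast at h
  linarith

lemma toNat_packing_mono {X : Set (Pt n)} (hX : X ⊆ closedBall 0 1) {δ₁ δ₂ : ℝ}
    (h1 : 0 < δ₁) (h : δ₁ ≤ δ₂) :
    ((packingNumber X δ₂).toNat : ℝ) ≤ ((packingNumber X δ₁).toNat : ℝ) := by
  have := ENat.toNat_le_toNat (packingNumber_anti (F := X) h) (packingNumber_ne_top hX h1)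
  exact_mod_cast this

lemma one_le_toNat_packing {X : Set (Pt n)} (hX : X ⊆ closedBall 0 1) (hXne : X.Nonempty)
    {δ : ℝ} (hδ : 0 < δ) : 1 ≤ (packingNumber X δ).toNat := by
  have h1 := one_le_packingNumber (F := X) hXne δ
  have h2 := packingNumber_ne_top hX hδ
  rw [← Nat.cast_le (α := ℕ∞), ENat.coe_toNat h2]
  exact_mod_cast h1

lemma upperBoxDim_le_of_eventually {X : Set (Pt n)} (hX : X ⊆ closedBall 0 1) {s : ℝ} (hs : 0 ≤ s)
    {K : ℕ} (hK : 1 ≤ K)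
    (h : ∀ k, K ≤ k → ((packingNumber X (sc k)).toNat : ℝ) ≤ (2:ℝ) ^ ((k:ℝ) * s)) :
    upperBoxDim X ≤ ENNReal.ofReal s := by
  refine ENNReal.le_of_forall_pos_le_add fun ε hε _ => ?_
  have hεR : (0:ℝ) < ε := hε
  set K' : ℕ := max K (⌈s / (ε:ℝ)⌉₊ + 1) with hK'
  have hK'K : K ≤ K' := le_max_left _ _
  have hK'1 : 1 ≤ K' := le_trans hK hK'K
  have hev : ∀ᶠ δ in nhdsWithin (0:ℝ) (Ioi 0),
      ENNReal.ofReal (Real.log (((packingNumber X δ).toNat : ℝ)) / (-Real.log δ))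
        ≤ ENNReal.ofReal s + (ε : ℝ≥0∞) := by
    filter_upwards [Ioc_mem_nhdsGT_of_mem (mem_Ico.mpr ⟨le_rfl, sc_pos K'⟩)] with δ hδ
    obtain ⟨hδ0, hδK'⟩ := hδ
    set k := lv δ with hk
    have hkK' : K' ≤ k := le_lv hδ0 hδK'
    have hk1 : 1 ≤ k := le_trans hK'1 hkK'
    have hδsck : δ ≤ sc k := le_sc_lv hδ0 (hδK'.trans (sc_le_one K'))
    have hsck1 : sc (k+1) ≤ δ := sc_lv_succ_le hδ0
    have hN : ((packingNumber X δ).toNat : ℝ) ≤ (2:ℝ) ^ (((k+1:ℕ):ℝ) * s) := by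
      refine le_trans ?_ (h (k+1) (by omega))
      exact toNat_packing_mono hX (sc_pos (k+1)) hsck1
    have hnum : Real.log ((packingNumber X δ).toNat : ℝ) ≤ ((k:ℝ)+1) * s * Real.log 2 := by
      rcases Nat.eq_zero_or_pos (packingNumber X δ).toNat with h0 | hpos
      · rw [h0]
        push_cast
        rw [Real.log_zero]
        positivity
      · have hNpos : (0:ℝ) < ((packingNumber X δ).toNat : ℝ) := by exact_mod_cast hpos
        have hlog := Real.log_le_log hNpos hN
        rw [Real.log_rpow (by norm_num)] at hlog
        push_cast at hlog ⊢
        linarith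
    have hden : (k:ℝ) * Real.log 2 ≤ -Real.log δ := by
      have h2 := (le_sc_iff hδ0 k).mp hδsck
      rw [le_div_iff₀ log2_pos] at h2
      linarith
    have hkpos : (0:ℝ) < (k:ℝ) := by exact_mod_cast hk1
    have hdenpos : (0:ℝ) < (k:ℝ) * Real.log 2 := by positivity
    have hfrac : Real.log ((packingNumber X δ).toNat : ℝ) / (-Real.log δ)
        ≤ (((k:ℝ)+1) * s * Real.log 2) / ((k:ℝ) * Real.log 2) :=
      div_le_div₀ (by positivity) hnum hdenpos hden
    have heq : (((k:ℝ)+1) * s * Real.log 2) / ((k:ℝ) * Real.log 2) = s + s / (k:ℝ) := by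
      field_simp
    have hsk : s / (k:ℝ) ≤ (ε:ℝ) := by
      rw [div_le_iff₀ hkpos]
      have h1 : s / (ε:ℝ) ≤ (⌈s / (ε:ℝ)⌉₊ : ℝ) := Nat.le_ceil _
      have h2 : ((⌈s / (ε:ℝ)⌉₊ + 1 : ℕ) : ℝ) ≤ (k:ℝ) := by
        exact_mod_cast le_trans (le_max_right K _) hkK'
      have h3 : s / (ε:ℝ) ≤ (k:ℝ) := by push_cast at h2; linarith
      rw [div_le_iff₀ hεR] at h3
      linarith
    calc ENNReal.ofReal (Real.log ((packingNumber X δ).toNat : ℝ) / (-Real.log δ))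
        ≤ ENNReal.ofReal (s + (ε:ℝ)) := by
          refine ENNReal.ofReal_le_ofReal ?_
          rw [heq] at hfrac
          linarith
      _ = ENNReal.ofReal s + (ε : ℝ≥0∞) := by
          rw [ENNReal.ofReal_add hs hεR.le, ENNReal.ofReal_coe_nnreal]
  unfold upperBoxDim
  exact limsup_le_of_le (by isBoundedDefault) hev

lemma eventually_packing_le_of_lt {X : Set (Pt n)} (hX : X ⊆ closedBall 0 1) (hXne : X.Nonempty)
    {s : ℝ≥0} (hs : upperBoxDim X < (s : ℝ≥0∞)) :
    ∃ K : ℕ, 1 ≤ K ∧ ∀ k, K ≤ k →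
      ((packingNumber X (sc k)).toNat : ℝ) ≤ (2:ℝ) ^ ((k:ℝ) * (s:ℝ)) := by
  unfold upperBoxDim at hs
  have hev := eventually_lt_of_limsup_lt hs
  rw [eventually_iff, mem_nhdsGT_iff_exists_Ioc_subset] at hev
  obtain ⟨u, hu, hsub⟩ := hev
  obtain ⟨K, hK1, hKu⟩ := exists_sc_le hu
  refine ⟨K, hK1, fun k hk => ?_⟩
  have hmem : sc k ∈ Ioc (0:ℝ) u := ⟨sc_pos k, (sc_anti hk).trans hKu⟩
  have hlt := hsub hmem
  simp only [mem_setOf_eq] at hlt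
  have hspos : (0:ℝ) < (s:ℝ) := by
    rcases (zero_le (a := s)).eq_or_lt with h0 | h0
    · exfalso
      rw [← h0] at hlt
      simp at hlt
    · exact_mod_cast h0
  have hltR : Real.log ((packingNumber X (sc k)).toNat : ℝ) / (-Real.log (sc k)) < (s:ℝ) := by
    rw [← ENNReal.ofReal_coe_nnreal] at hlt
    exact (ENNReal.ofReal_lt_ofReal_iff hspos).mp hlt
  have hden : -Real.log (sc k) = (k:ℝ) * Real.log 2 := by rw [log_sc]; ring
  have hk1 : 1 ≤ k := le_trans hK1 hk
  have hkpos : (0:ℝ) < (k:ℝ) := by exact_mod_cast hk1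
  rw [hden, div_lt_iff₀ (by positivity)] at hltR
  have hN1 : (1:ℝ) ≤ ((packingNumber X (sc k)).toNat : ℝ) := by
    exact_mod_cast one_le_toNat_packing hX hXne (sc_pos k)
  have hNpos : (0:ℝ) < ((packingNumber X (sc k)).toNat : ℝ) := lt_of_lt_of_le one_pos hN1
  have hexp : ((packingNumber X (sc k)).toNat : ℝ)
      < Real.exp ((s:ℝ) * ((k:ℝ) * Real.log 2)) := by
    rw [← Real.exp_log hNpos]
    exact Real.exp_lt_exp.mpr hltR
  refine hexp.le.trans (le_of_eq ?_)
  rw [Real.rpow_def_of_pos (by norm_num : (0:ℝ) < 2)]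
  congr 1
  ring

end Aux

section Aux3
open MeasureTheory
variable {n : ℕ}

lemma tsum_subtype_mono {α : Type*} {A B : Set α} (g : α → ℝ≥0∞) (h : A ⊆ B) :
    ∑' x : A, g x ≤ ∑' x : B, g x := by
  rw [tsum_subtype, tsum_subtype]
  exact ENNReal.tsum_le_tsum fun x =>
    Set.indicator_le_indicator_of_subset h (fun _ => zero_le) x

lemma tsum_subtype_le_card_mul {α : Type*} {A : Set α} (hA : A.Finite) (g : α → ℝ≥0∞) (b : ℝ≥0∞)
    (hb : ∀ x ∈ A, g x ≤ b) : ∑' x : A, g (x : α) ≤ (hA.toFinset.card : ℝ≥0∞) * b := by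
  rw [tsum_subtype,
    tsum_eq_sum (s := hA.toFinset)
      (fun c hc => Set.indicator_of_notMem (fun h => hc (hA.mem_toFinset.mpr h)) g)]
  calc ∑ x ∈ hA.toFinset, A.indicator g x ≤ hA.toFinset.card • b :=
        Finset.sum_le_card_nsmul _ _ _ (fun x hx => by
          rw [Set.indicator_of_mem (hA.mem_toFinset.mp hx)]
          exact hb x (hA.mem_toFinset.mp hx))
    _ = (hA.toFinset.card : ℝ≥0∞) * b := nsmul_eq_mul _ _

lemma sum_finset_le_tsum_subtype {α : Type*} {E : Set α} (g : α → ℝ≥0∞) (F : Finset α)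
    (hF : ↑F ⊆ E) : ∑ x ∈ F, g x ≤ ∑' x : E, g (x : α) := by
  rw [tsum_subtype]
  refine le_trans (le_of_eq (Finset.sum_congr rfl fun x hx =>
    (Set.indicator_of_mem (hF hx) g).symm)) (ENNReal.sum_le_tsum F)

lemma tsum_le_of_range_sum_le {a : ℕ → ℝ≥0∞} {c : ℝ≥0∞}
    (h : ∀ K, ∑ k ∈ Finset.range K, a k ≤ c) : ∑' k, a k ≤ c := by
  rw [ENNReal.tsum_eq_iSup_sum]
  refine iSup_le fun s => ?_
  obtain ⟨K, hK⟩ := s.exists_nat_subset_range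
  exact le_trans (Finset.sum_le_sum_of_subset hK) (h K)

lemma tsum_lt_top_of_geom {a : ℕ → ℝ≥0∞} {C ρ : ℝ≥0∞} (hρ : ρ < 1) (hC : C ≠ ⊤)
    (ha : ∀ k, a k ≠ ⊤) (K : ℕ) (h : ∀ k, K ≤ k → a k ≤ C * ρ ^ k) : ∑' k, a k < ⊤ := by
  classical
  have hle : ∀ k, a k ≤ (if k < K then a k else 0) + C * ρ ^ k := by
    intro k
    by_cases hk : k < K
    · simp only [if_pos hk]
      exact le_self_add
    · simp only [if_neg hk, zero_add]
      exact h k (by omega)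
  refine lt_of_le_of_lt (ENNReal.tsum_le_tsum hle) ?_
  rw [ENNReal.tsum_add]
  refine ENNReal.add_lt_top.mpr ⟨?_, ?_⟩
  · rw [tsum_eq_sum (s := Finset.range K) (fun b hb => by
      simp only [Finset.mem_range] at hb
      simp [hb])]
    refine ENNReal.sum_lt_top.mpr fun i _ => ?_
    split
    · exact (ha i).lt_top
    · exact ENNReal.zero_lt_top
  · rw [ENNReal.tsum_mul_left, ENNReal.tsum_geometric]
    refine ENNReal.mul_lt_top hC.lt_top ?_
    rw [ENNReal.inv_lt_top]
    exact tsub_pos_of_lt hρ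

end Aux3

section Aux4
variable {n : ℕ}

lemma sc_rpow (k : ℕ) : sc k = (2:ℝ) ^ (-(k:ℝ)) := by
  rw [sc, Real.rpow_neg (by norm_num), Real.rpow_natCast]

lemma rpow_prod_eq (s t : ℝ) (k : ℕ) :
    (2:ℝ) ^ ((k:ℝ) * s) * sc k ^ t = ((2:ℝ) ^ (s - t)) ^ k := by
  rw [sc_rpow, ← Real.rpow_mul (by norm_num : (0:ℝ) ≤ 2),
      ← Real.rpow_add (by norm_num : (0:ℝ) < 2),
      ← Real.rpow_natCast ((2:ℝ) ^ (s - t)) k,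
      ← Real.rpow_mul (by norm_num : (0:ℝ) ≤ 2)]
  congr 1
  ring

lemma accSeries_lt_top {X : Set (Pt n)} (hX : X ⊆ sphere 0 1) (hXne : X.Nonempty)
    {E : Set (Pt n)} (hE : E ⊆ ball 0 1)
    {c₁ : ℝ} (hc₁0 : 0 < c₁) (hc₁1 : c₁ < 1)
    (hc₁ : ∀ x ∈ E, closedBall x (c₁ * (1 - ‖x‖)) ∩ E = {x})
    {c₂ : ℝ} (hc₂1 : 1 ≤ c₂) (hc₂ : ∀ x ∈ E, ∃ z ∈ X, dist x z ≤ c₂ * (1 - ‖x‖))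
    {t : ℝ≥0} (ht : upperBoxDim X < (t : ℝ≥0∞)) :
    accSeries E (t : ℝ) < ⊤ := by
  classical
  have hX' : X ⊆ closedBall 0 1 := hX.trans sphere_subset_closedBall
  obtain ⟨s, hs1, hs2⟩ := ENNReal.lt_iff_exists_nnreal_btwn.mp ht
  obtain ⟨K, hK1, hKs⟩ := eventually_packing_le_of_lt hX' hXne hs1
  have hst : (s:ℝ) < (t:ℝ) := by exact_mod_cast hs2
  set A : ℕ → Set (Pt n) := fun k => {x | x ∈ E ∧ sc (k+1) < 1 - ‖x‖ ∧ 1 - ‖x‖ ≤ sc k} with hA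
  have hnorm : ∀ x ∈ E, 0 < 1 - ‖x‖ ∧ 1 - ‖x‖ ≤ 1 := by
    intro x hx
    have h1 : ‖x‖ < 1 := mem_ball_zero_iff.mp (hE hx)
    have h2 : 0 ≤ ‖x‖ := norm_nonneg x
    exact ⟨by linarith, by linarith⟩
  have hcover : E ⊆ ⋃ k, A k := by
    intro x hx
    obtain ⟨h0, h1⟩ := hnorm x hx
    refine mem_iUnion.mpr ⟨lv (1 - ‖x‖), hx, ?_, le_sc_lv h0 h1⟩
    rcases lt_or_eq_of_le (sc_lv_succ_le h0) with h | h
    · exact h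
    · exfalso
      have := le_lv h0 (le_of_eq h.symm)
      omega
  have hsepA : ∀ k, ∀ x ∈ A k, ∀ y ∈ A k, x ≠ y → c₁ * sc (k+1) < dist x y := by
    intro k x hx y hy hxy
    have hyx : y ∉ closedBall x (c₁ * (1 - ‖x‖)) := by
      intro hmem
      have hm : y ∈ closedBall x (c₁ * (1 - ‖x‖)) ∩ E := ⟨hmem, hy.1⟩
      rw [hc₁ x hx.1] at hm
      exact hxy.symm hm
    rw [mem_closedBall, not_le] at hyx
    have hlt : c₁ * sc (k+1) < c₁ * (1 - ‖x‖) :=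
      mul_lt_mul_of_pos_left hx.2.1 hc₁0
    rw [dist_comm] at hyx
    linarith
  have hAfin : ∀ k, (A k).Finite := by
    intro k
    by_contra hinf
    have hinf' : (A k).Infinite := hinf
    have hrpos : 0 < c₁ * sc (k+1) := mul_pos hc₁0 (sc_pos _)
    obtain ⟨W, hWsub, hWcard⟩ := hinf'.exists_subset_card_eq
      (⌈((2 * 1 + c₁ * sc (k+1)) / (c₁ * sc (k+1))) ^ n⌉₊ + 1)
    have hb := card_le_of_separated (0 : Pt n) hrpos zero_le_one W
      (fun x hx => ball_subset_closedBall (hE (hWsub hx).1))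
      (fun x hx y hy hxy => hsepA k x (hWsub hx) y (hWsub hy) hxy)
    have hb2 := hb.trans (Nat.le_ceil _)
    rw [hWcard] at hb2
    push_cast at hb2
    linarith
  set M₀ : ℝ := ((4 * (c₂ + 2) + c₁) / c₁) ^ n with hM₀
  set M : ℕ := ⌈M₀⌉₊ with hM
  have hc₂0 : (0:ℝ) < c₂ := lt_of_lt_of_le one_pos hc₂1
  have hcount : ∀ k, (hAfin k).toFinset.card ≤ M * (packingNumber X (sc k)).toNat := by
    intro k
    obtain ⟨Z, hZX, hZd, hZcard, hZ1, hZnet⟩ := exists_maximal_packing hX' hXne (sc_pos k)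
    have hZcard' : Z.card = (packingNumber X (sc k)).toNat := by
      rw [← hZcard]
      simp
    have hex : ∀ x ∈ A k, ∃ z, z ∈ Z ∧ dist x z ≤ (c₂ + 2) * sc k := by
      intro x hx
      obtain ⟨w, hwX, hwd⟩ := hc₂ x hx.1
      obtain ⟨z, hzZ, hzd⟩ := hZnet w hwX
      refine ⟨z, hzZ, ?_⟩
      calc dist x z ≤ dist x w + dist w z := dist_triangle _ _ _
        _ ≤ c₂ * (1 - ‖x‖) + 2 * sc k := add_le_add hwd hzd
        _ ≤ c₂ * sc k + 2 * sc k := by nlinarith [hx.2.2]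
        _ = (c₂ + 2) * sc k := by ring
    set f : Pt n → Pt n := fun x => if h : ∃ z, z ∈ Z ∧ dist x z ≤ (c₂ + 2) * sc k
      then h.choose else x with hf
    have hmain := Finset.card_le_mul_card_image_of_maps_to
      (f := f) (s := (hAfin k).toFinset) (t := Z) ?_ M ?_
    · rw [hZcard'] at hmain
      exact hmain
    · intro a ha
      have haA := (hAfin k).mem_toFinset.mp ha
      have h := hex a haA
      rw [hf]
      simp only
      rw [dif_pos h]
      exact h.choose_spec.1
    · intro z hz
      have hrpos : 0 < c₁ * sc (k+1) := mul_pos hc₁0 (sc_pos _)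
      have hRpos : (0:ℝ) ≤ (c₂ + 2) * sc k := mul_nonneg (by linarith) (sc_pos k).le
      have hb := card_le_of_separated z hrpos hRpos
        (Finset.filter (fun a => f a = z) (hAfin k).toFinset) ?_ ?_
      · have heq : ((2 * ((c₂ + 2) * sc k) + c₁ * sc (k+1)) / (c₁ * sc (k+1))) ^ n = M₀ := by
          rw [hM₀, sc_succ]
          congr 1
          have h1 : sc k ≠ 0 := (sc_pos k).ne'
          field_simp
          ring
        rw [heq] at hb
        have hble : ((Finset.filter (fun a => f a = z) (hAfin k).toFinset).card : ℝ) ≤ (M:ℝ) :=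
          hb.trans (Nat.le_ceil _)
        exact_mod_cast hble
      · intro x hx
        rw [Finset.mem_coe, Finset.mem_filter] at hx
        obtain ⟨hxA, hxf⟩ := hx
        have haA := (hAfin k).mem_toFinset.mp hxA
        have h := hex x haA
        rw [mem_closedBall, ← hxf, hf]
        simp only
        rw [dif_pos h]
        exact h.choose_spec.2
      · intro x hx y hy hxy
        rw [Finset.mem_filter] at hx hy
        exact hsepA k x ((hAfin k).mem_toFinset.mp hx.1) y ((hAfin k).mem_toFinset.mp hy.1) hxy
  have hterm : ∀ k, ∀ x ∈ A k, ENNReal.ofReal ((1 - ‖x‖) ^ (t:ℝ)) ≤ ENNReal.ofReal (sc k ^ (t:ℝ)) := by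
    intro k x hx
    refine ENNReal.ofReal_le_ofReal ?_
    refine Real.rpow_le_rpow ?_ hx.2.2 t.2
    linarith [(hnorm x hx.1).1]
  set a : ℕ → ℝ≥0∞ := fun k =>
    ((hAfin k).toFinset.card : ℝ≥0∞) * ENNReal.ofReal (sc k ^ (t:ℝ)) with ha
  have hseries : accSeries E (t:ℝ) ≤ ∑' k, a k := by
    unfold accSeries
    calc ∑' x : E, ENNReal.ofReal ((1 - ‖(x:Pt n)‖) ^ (t:ℝ))
        ≤ ∑' x : (⋃ k, A k), ENNReal.ofReal ((1 - ‖(x:Pt n)‖) ^ (t:ℝ)) :=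
          tsum_subtype_mono (fun y => ENNReal.ofReal ((1 - ‖y‖) ^ (t:ℝ))) hcover
      _ ≤ ∑' k, ∑' x : A k, ENNReal.ofReal ((1 - ‖(x:Pt n)‖) ^ (t:ℝ)) :=
          ENNReal.tsum_iUnion_le_tsum (fun y => ENNReal.ofReal ((1 - ‖y‖) ^ (t:ℝ))) A
      _ ≤ ∑' k, a k := ENNReal.tsum_le_tsum fun k =>
          tsum_subtype_le_card_mul (hAfin k) (fun y => ENNReal.ofReal ((1 - ‖y‖) ^ (t:ℝ))) _ (hterm k)
  refine lt_of_le_of_lt hseries ?_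
  set ρ₀ : ℝ := (2:ℝ) ^ ((s:ℝ) - (t:ℝ)) with hρ₀
  have hρ₀pos : 0 < ρ₀ := Real.rpow_pos_of_pos (by norm_num) _
  have hρ₀lt : ρ₀ < 1 := Real.rpow_lt_one_of_one_lt_of_neg (by norm_num) (by linarith)
  refine tsum_lt_top_of_geom (C := (M:ℝ≥0∞)) (ρ := ENNReal.ofReal ρ₀)
    (ENNReal.ofReal_lt_one.mpr hρ₀lt) (by simp)
    (fun k => ENNReal.mul_ne_top (ENNReal.natCast_ne_top _) ENNReal.ofReal_ne_top) K ?_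
  intro k hk
  have hNk := hKs k hk
  have hsck : (0:ℝ) ≤ sc k ^ (t:ℝ) := (Real.rpow_pos_of_pos (sc_pos k) _).le
  calc a k ≤ ((M * (packingNumber X (sc k)).toNat : ℕ) : ℝ≥0∞) * ENNReal.ofReal (sc k ^ (t:ℝ)) := by
        show ((hAfin k).toFinset.card : ℝ≥0∞) * ENNReal.ofReal (sc k ^ (t:ℝ)) ≤ _
        exact mul_le_mul_left (by exact_mod_cast hcount k) _
    _ = (M:ℝ≥0∞) * (((packingNumber X (sc k)).toNat : ℕ) : ℝ≥0∞) * ENNReal.ofReal (sc k ^ (t:ℝ)) := by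
        push_cast
        ring
    _ ≤ (M:ℝ≥0∞) * ENNReal.ofReal ((2:ℝ) ^ ((k:ℝ) * (s:ℝ))) * ENNReal.ofReal (sc k ^ (t:ℝ)) := by
        gcongr
        rw [← ENNReal.ofReal_natCast]
        exact ENNReal.ofReal_le_ofReal hNk
    _ = (M:ℝ≥0∞) * ENNReal.ofReal ((2:ℝ) ^ ((k:ℝ) * (s:ℝ)) * sc k ^ (t:ℝ)) := by
        rw [mul_assoc, ENNReal.ofReal_mul (by positivity)]
    _ = (M:ℝ≥0∞) * ENNReal.ofReal ρ₀ ^ k := by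
        rw [rpow_prod_eq, ENNReal.ofReal_pow hρ₀pos.le]

lemma critExp_le_upperBoxDim_aux {X : Set (Pt n)} (hX : X ⊆ sphere 0 1) (hXne : X.Nonempty)
    {E : Set (Pt n)} (hE : E ⊆ ball 0 1) (hsep : SeparatedSet E) (hwa : WellApproximated E)
    (hlim : limitSet E = X) : critExp E ≤ upperBoxDim X := by
  obtain ⟨c₁, hc₁0, hc₁1, hc₁⟩ := hsep
  obtain ⟨c₂, hc₂1, hc₂⟩ := hwa
  rw [hlim] at hc₂
  refine le_of_forall_gt_imp_ge_of_dense fun d hd => ?_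
  obtain ⟨u, hu1, hu2⟩ := ENNReal.lt_iff_exists_nnreal_btwn.mp hd
  have hacc : accSeries E (u:ℝ) < ⊤ :=
    accSeries_lt_top hX hXne hE hc₁0 hc₁1 hc₁ hc₂1 hc₂ hu1
  calc critExp E ≤ (u : ℝ≥0∞) := by
        unfold critExp
        exact iInf_le_of_le u (iInf_le_of_le hacc le_rfl)
    _ ≤ d := hu2.le

end Aux4

section Aux5
variable {n : ℕ}

lemma sc_lt_sc {k l : ℕ} (h : k < l) : sc l < sc k := by
  rw [sc, sc, inv_lt_inv₀ (by positivity) (by positivity)]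
  exact pow_lt_pow_right₀ (by norm_num) h

lemma sc_inj {k l : ℕ} (h : sc k = sc l) : k = l := by
  rcases lt_trichotomy k l with hlt | he | hlt
  · exact absurd h (sc_lt_sc hlt).ne'
  · exact he
  · exact absurd h (sc_lt_sc hlt).ne

lemma exists_good_E (X : Set (Pt n)) (hX : X ⊆ sphere 0 1) (hXne : X.Nonempty)
    (hXcl : IsClosed X) :
    ∃ E : Set (Pt n), E ⊆ ball 0 1 ∧ IsDiscreteSet E ∧ SeparatedSet E ∧
      WellApproximated E ∧ limitSet E = X ∧ critExp E = upperBoxDim X := by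
  classical
  have hX' : X ⊆ closedBall 0 1 := hX.trans sphere_subset_closedBall
  have hZex : ∀ k : ℕ, ∃ Zk : Finset (Pt n), ↑Zk ⊆ X ∧
      ((↑Zk : Set (Pt n)).PairwiseDisjoint fun x => closedBall x (sc (k+1))) ∧
      (Zk.card : ℕ∞) = packingNumber X (sc (k+1)) ∧ 1 ≤ Zk.card ∧
      ∀ w ∈ X, ∃ z ∈ Zk, dist w z ≤ 2 * sc (k+1) :=
    fun k => exists_maximal_packing hX' hXne (sc_pos (k+1))
  choose Z hZX hZd hZcard hZ1 hZnet using hZex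
  set W : ℕ → Finset (Pt n) := fun k => (Z k).image (fun z => (1 - sc (k+1)) • z) with hW
  set E : Set (Pt n) := ⋃ k, (W k : Set (Pt n)) with hEdef
  have htpos : ∀ k : ℕ, 0 < sc (k+1) := fun k => sc_pos _
  have hthalf : ∀ k : ℕ, sc (k+1) ≤ 1/2 := by
    intro k
    have h := sc_anti (show 1 ≤ k + 1 by omega)
    rw [show sc 1 = 1/2 by rw [sc]; norm_num] at h
    exact h
  have hmemW : ∀ k x, x ∈ W k ↔ ∃ z ∈ Z k, (1 - sc (k+1)) • z = x := by
    intro k x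
    rw [hW]
    simp [Finset.mem_image]
  have hnormZ : ∀ k, ∀ z ∈ Z k, ‖z‖ = 1 := by
    intro k z hz
    have h := hX (hZX k hz)
    rwa [mem_sphere_zero_iff_norm] at h
  have hnormW : ∀ k, ∀ x ∈ W k, ‖x‖ = 1 - sc (k+1) := by
    intro k x hx
    obtain ⟨z, hz, rfl⟩ := (hmemW k x).mp hx
    rw [norm_smul, hnormZ k z hz, Real.norm_eq_abs,
      abs_of_pos (by linarith [hthalf k]), mul_one]
  have hmemE : ∀ x, x ∈ E ↔ ∃ k, x ∈ W k := by
    intro x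
    rw [hEdef]
    simp
  have hEball : E ⊆ ball 0 1 := by
    intro x hx
    obtain ⟨k, hk⟩ := (hmemE x).mp hx
    rw [mem_ball_zero_iff, hnormW k x hk]
    linarith [htpos k]
  have hdistWZ : ∀ k, ∀ z ∈ Z k, dist ((1 - sc (k+1)) • z) z = sc (k+1) := by
    intro k z hz
    rw [dist_eq_norm]
    have h : (1 - sc (k+1)) • z - z = -(sc (k+1) • z) := by
      rw [sub_smul, one_smul]
      abel
    rw [h, norm_neg, norm_smul, hnormZ k z hz, Real.norm_eq_abs,
      abs_of_pos (htpos k), mul_one]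
  -- key separation estimate
  have key : ∀ k j, ∀ x ∈ W k, ∀ y ∈ W j, y ≠ x → (1 - ‖x‖)/2 ≤ dist y x := by
    intro k j x hx y hy hne
    have hxn : ‖x‖ = 1 - sc (k+1) := hnormW k x hx
    rcases eq_or_ne j k with rfl | hjk
    · obtain ⟨z, hz, hzx⟩ := (hmemW j x).mp hx
      obtain ⟨w, hw, hwy⟩ := (hmemW j y).mp hy
      have hzw : w ≠ z := by
        intro h
        rw [h, hzx] at hwy
        exact hne hwy.symm
      have hd := two_mul_lt_dist (htpos j).le hzw (hZd j hw hz hzw)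
      rw [hxn, ← hwy, ← hzx, dist_smul₀, Real.norm_eq_abs,
        abs_of_pos (by linarith [hthalf j] : (0:ℝ) < 1 - sc (j+1))]
      nlinarith [htpos j, hthalf j]
    · have hyn : ‖y‖ = 1 - sc (j+1) := hnormW j y hy
      have habs : |‖y‖ - ‖x‖| ≤ dist y x := by
        rw [dist_eq_norm]
        exact abs_norm_sub_norm_le y x
      rw [hxn, hyn] at habs
      have hd : (1 - sc (j+1)) - (1 - sc (k+1)) = sc (k+1) - sc (j+1) := by ring
      rw [hd] at habs
      rw [hxn]
      have h1 := le_abs_self (sc (k+1) - sc (j+1))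
      have h2 := neg_le_abs (sc (k+1) - sc (j+1))
      rcases lt_or_gt_of_ne hjk with h | h
      · -- j < k, so k+1 ≥ j+2 and sc (k+1) ≤ sc (j+1)/2
        have h3 : sc (k+1) ≤ sc (j+2) := sc_anti (by omega)
        rw [sc_succ (j+1)] at h3
        linarith
      · -- k < j
        have h3 : sc (j+1) ≤ sc (k+2) := sc_anti (by omega)
        rw [sc_succ (k+1)] at h3
        linarith
  have hsepball : ∀ x ∈ E, closedBall x ((1/4) * (1 - ‖x‖)) ∩ E = {x} := by
    intro x hx
    have hx1 : ‖x‖ < 1 := mem_ball_zero_iff.mp (hEball hx)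
    apply Set.eq_singleton_iff_unique_mem.mpr
    refine ⟨⟨mem_closedBall_self (by nlinarith), hx⟩, ?_⟩
    rintro y ⟨hyb, hyE⟩
    by_contra hne
    obtain ⟨k, hk⟩ := (hmemE x).mp hx
    obtain ⟨j, hj⟩ := (hmemE y).mp hyE
    have h := key k j x hk y hj hne
    rw [mem_closedBall] at hyb
    linarith
  have hsep : SeparatedSet E := ⟨1/4, by norm_num, by norm_num, hsepball⟩
  have hdisc : IsDiscreteSet E := by
    intro x hx
    have hx1 : ‖x‖ < 1 := mem_ball_zero_iff.mp (hEball hx)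
    exact ⟨(1/4) * (1 - ‖x‖), by nlinarith, hsepball x hx⟩
  -- limit set
  have hXsubcl : X ⊆ closure E := by
    intro z hz
    rw [Metric.mem_closure_iff]
    intro ε hε
    obtain ⟨K, hK1, hKle⟩ := exists_sc_le (show (0:ℝ) < ε/4 by linarith)
    obtain ⟨w, hwZ, hwd⟩ := hZnet K z hz
    refine ⟨(1 - sc (K+1)) • w, (hmemE _).mpr ⟨K, (hmemW K _).mpr ⟨w, hwZ, rfl⟩⟩, ?_⟩
    have h1 : dist ((1 - sc (K+1)) • w) w = sc (K+1) := hdistWZ K w hwZ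
    have h2 : sc (K+1) ≤ sc K := sc_anti (by omega)
    calc dist z ((1 - sc (K+1)) • w)
        ≤ dist z w + dist w ((1 - sc (K+1)) • w) := dist_triangle _ _ _
      _ = dist z w + sc (K+1) := by rw [dist_comm w, h1]
      _ ≤ 2 * sc (K+1) + sc (K+1) := by linarith [hwd]
      _ < ε := by
          have := htpos K
          have h4 := hKle
          nlinarith
  have hXE : ∀ z ∈ X, z ∉ E := by
    intro z hz hzE
    obtain ⟨k, hk⟩ := (hmemE z).mp hzE
    have h1 : ‖z‖ = 1 := mem_sphere_zero_iff_norm.mp (hX hz)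
    have h2 := hnormW k z hk
    have := htpos k
    linarith [h1 ▸ h2]
  have hlimsub : limitSet E ⊆ X := by
    rintro w ⟨hwcl, hwE⟩
    have hwnorm : ‖w‖ ≤ 1 := by
      have h1 : closure E ⊆ closedBall 0 1 :=
        closure_minimal (hEball.trans ball_subset_closedBall) Metric.isClosed_closedBall
      exact mem_closedBall_zero_iff.mp (h1 hwcl)
    rcases lt_or_eq_of_le hwnorm with hwlt | hweq
    · -- ‖w‖ < 1 : contradiction, w ∈ E
      exfalso
      set ε : ℝ := (1 - ‖w‖)/2 with hε
      have hεpos : 0 < ε := by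
        rw [hε]
        linarith
      obtain ⟨K, hK1, hKle⟩ := exists_sc_le (show (0:ℝ) < ε/2 by linarith)
      set S : Set (Pt n) := ⋃ k ∈ Finset.range K, (W k : Set (Pt n)) with hS
      have hSfin : S.Finite :=
        Set.Finite.biUnion (Finset.range K).finite_toSet (fun k _ => (W k).finite_toSet)
      have hsub : ∀ x ∈ E, dist w x < ε → x ∈ S := by
        intro x hxE hxd
        obtain ⟨k, hk⟩ := (hmemE x).mp hxE
        have hxn := hnormW k x hk
        have habs : |‖w‖ - ‖x‖| ≤ dist w x := by
          rw [dist_eq_norm]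
          exact abs_norm_sub_norm_le w x
        have h2 : sc (k+1) ≥ ε := by
          have h3 := neg_le_abs (‖w‖ - ‖x‖)
          rw [hxn] at h3 habs
          rw [hε]
          nlinarith [neg_le_abs (‖w‖ - (1 - sc (k+1))), le_abs_self (‖w‖ - (1 - sc (k+1)))]
        have hkK : k < K := by
          by_contra hcon
          push_neg at hcon
          have : sc (k+1) ≤ sc K := sc_anti (by omega)
          linarith
        exact mem_biUnion (Finset.mem_coe.mpr (Finset.mem_range.mpr hkK)) hk
      have hwS : w ∈ closure S := by
        rw [Metric.mem_closure_iff]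
        intro r hr
        obtain ⟨x, hxE, hxd⟩ := Metric.mem_closure_iff.mp hwcl (min r ε) (lt_min hr hεpos)
        exact ⟨x, hsub x hxE (hxd.trans_le (min_le_right _ _)), hxd.trans_le (min_le_left _ _)⟩
      rw [hSfin.isClosed.closure_eq] at hwS
      obtain ⟨k, _, hk⟩ := mem_iUnion₂.mp hwS
      exact hwE ((hmemE w).mpr ⟨k, hk⟩)
    · -- ‖w‖ = 1 : w ∈ X
      have : ∀ ε > 0, ∃ z ∈ X, dist w z < ε := by
        intro ε hε
        obtain ⟨x, hxE, hxd⟩ := Metric.mem_closure_iff.mp hwcl (ε/3) (by linarith)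
        obtain ⟨k, hk⟩ := (hmemE x).mp hxE
        obtain ⟨z, hz, hzx⟩ := (hmemW k x).mp hk
        have hxn := hnormW k x hk
        have habs : |‖w‖ - ‖x‖| ≤ dist w x := by
          rw [dist_eq_norm]
          exact abs_norm_sub_norm_le w x
        have hsc : sc (k+1) ≤ ε/3 := by
          rw [hweq, hxn, show (1:ℝ) - (1 - sc (k+1)) = sc (k+1) by ring,
            abs_of_nonneg (htpos k).le] at habs
          linarith
        refine ⟨z, hZX k hz, ?_⟩
        calc dist w z ≤ dist w x + dist x z := dist_triangle _ _ _
          _ = dist w x + sc (k+1) := by rw [← hzx, hdistWZ k z hz]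
          _ < ε/3 + ε/3 := by linarith
          _ < ε := by linarith
      rw [← hXcl.closure_eq, Metric.mem_closure_iff]
      exact this
  have hlim : limitSet E = X := by
    apply Set.Subset.antisymm hlimsub
    intro z hz
    exact ⟨hXsubcl hz, hXE z hz⟩
  have hwa : WellApproximated E := by
    refine ⟨1, le_rfl, ?_⟩
    intro x hx
    obtain ⟨k, hk⟩ := (hmemE x).mp hx
    obtain ⟨z, hz, hzx⟩ := (hmemW k x).mp hk
    refine ⟨z, hlim.symm ▸ hZX k hz, ?_⟩
    have hn := hnormW k x hk
    rw [← hzx, hdistWZ k z hz]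
    rw [← hzx] at hn
    rw [hn, show (1:ℝ) * (1 - (1 - sc (k+1))) = sc (k+1) by ring]
  -- critExp lower bound: upperBoxDim ≤ critExp
  have hcritge : upperBoxDim X ≤ critExp E := by
    unfold critExp
    refine le_iInf fun s => le_iInf fun hs => ?_
    set g : Pt n → ℝ≥0∞ := fun y => ENNReal.ofReal ((1 - ‖y‖) ^ (s:ℝ)) with hg
    set b : ℕ → ℝ≥0∞ := fun k =>
      ((Z k).card : ℝ≥0∞) * ENNReal.ofReal (sc (k+1) ^ (s:ℝ)) with hb
    have hWd : ∀ k j : ℕ, k ≠ j → Disjoint (W k) (W j) := by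
      intro k j hkj
      rw [Finset.disjoint_left]
      intro x hxk hxj
      have h1 := hnormW k x hxk
      have h2 := hnormW j x hxj
      have h3 : sc (k+1) = sc (j+1) := by linarith
      have h4 : k + 1 = j + 1 := sc_inj h3
      omega
    have hsumW : ∀ k, ∑ x ∈ W k, g x = b k := by
      intro k
      have hconst : ∀ x ∈ W k, g x = ENNReal.ofReal (sc (k+1) ^ (s:ℝ)) := by
        intro x hx
        show ENNReal.ofReal ((1 - ‖x‖) ^ (s:ℝ)) = _
        rw [hnormW k x hx, show (1:ℝ) - (1 - sc (k+1)) = sc (k+1) by ring]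
      have hcard : (W k).card = (Z k).card := by
        rw [hW]
        exact Finset.card_image_of_injective _
          (smul_right_injective (Pt n) (by linarith [hthalf k, htpos k] : (1:ℝ) - sc (k+1) ≠ 0))
      rw [Finset.sum_congr rfl hconst, Finset.sum_const, nsmul_eq_mul, hcard]
    have haccg : accSeries E ((s:ℝ≥0):ℝ) = ∑' x : E, g (x : Pt n) := rfl
    have hpartial : ∀ K, ∑ k ∈ Finset.range K, b k ≤ accSeries E ((s:ℝ≥0):ℝ) := by
      intro K
      have hdisjr : (↑(Finset.range K) : Set ℕ).PairwiseDisjoint W :=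
        fun i _ j _ hij => hWd i j hij
      have heq : ∑ k ∈ Finset.range K, b k = ∑ x ∈ (Finset.range K).biUnion W, g x := by
        rw [Finset.sum_biUnion hdisjr]
        exact Finset.sum_congr rfl fun k _ => (hsumW k).symm
      rw [heq, haccg]
      refine sum_finset_le_tsum_subtype g ((Finset.range K).biUnion W) ?_
      intro x hx
      rw [Finset.mem_coe, Finset.mem_biUnion] at hx
      obtain ⟨k, _, hk⟩ := hx
      exact (hmemE x).mpr ⟨k, hk⟩
    have hbsum : ∑' k, b k ≠ ⊤ :=
      (lt_of_le_of_lt (tsum_le_of_range_sum_le hpartial) hs).ne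
    obtain ⟨K₀, hK₀⟩ := ENNReal.tendsto_atTop_zero.mp
      (ENNReal.tendsto_atTop_zero_of_tsum_ne_top hbsum) 1 zero_lt_one
    have hfinal : ∀ m, K₀ + 1 ≤ m →
        ((packingNumber X (sc m)).toNat : ℝ) ≤ (2:ℝ) ^ ((m:ℝ) * ((s:ℝ≥0):ℝ)) := by
      intro m hm
      obtain ⟨k, rfl⟩ : ∃ k, m = k + 1 := ⟨m - 1, by omega⟩
      have hbk : ((Z k).card : ℝ≥0∞) * ENNReal.ofReal (sc (k+1) ^ (s:ℝ)) ≤ 1 :=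
        hK₀ k (by omega)
      have hcardZ : ((Z k).card : ℝ) = ((packingNumber X (sc (k+1))).toNat : ℝ) := by
        have h1 : (Z k).card = (packingNumber X (sc (k+1))).toNat := by
          rw [← hZcard k]
          simp
        exact_mod_cast h1
      have hq : (0:ℝ) ≤ sc (k+1) ^ (s:ℝ) := (Real.rpow_pos_of_pos (htpos k) _).le
      have hreal : ((Z k).card : ℝ) * sc (k+1) ^ (s:ℝ) ≤ 1 := by
        rw [← ENNReal.ofReal_natCast, ← ENNReal.ofReal_mul (by positivity)] at hbk
        exact ENNReal.ofReal_le_one.mp hbk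
      have hid : sc (k+1) ^ (s:ℝ) * (2:ℝ) ^ ((((k+1):ℕ):ℝ) * (s:ℝ)) = 1 := by
        rw [sc_rpow, ← Real.rpow_mul (by norm_num : (0:ℝ) ≤ 2),
          ← Real.rpow_add (by norm_num : (0:ℝ) < 2),
          show -(((k+1):ℕ):ℝ) * (s:ℝ) + (((k+1):ℕ):ℝ) * (s:ℝ) = 0 by ring,
          Real.rpow_zero]
      have h2nn : (0:ℝ) ≤ (2:ℝ) ^ ((((k+1):ℕ):ℝ) * (s:ℝ)) :=
        (Real.rpow_pos_of_pos (by norm_num) _).le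
      calc ((packingNumber X (sc (k+1))).toNat : ℝ)
          = ((Z k).card : ℝ) * (sc (k+1) ^ (s:ℝ) * (2:ℝ) ^ ((((k+1):ℕ):ℝ) * (s:ℝ))) := by
            rw [hid, mul_one, hcardZ]
        _ = (((Z k).card : ℝ) * sc (k+1) ^ (s:ℝ)) * (2:ℝ) ^ ((((k+1):ℕ):ℝ) * (s:ℝ)) := by
            ring
        _ ≤ 1 * (2:ℝ) ^ ((((k+1):ℕ):ℝ) * (s:ℝ)) := mul_le_mul_of_nonneg_right hreal h2nn
        _ = (2:ℝ) ^ ((((k+1):ℕ):ℝ) * (s:ℝ)) := one_mul _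
    have hfin := upperBoxDim_le_of_eventually hX' (s := ((s:ℝ≥0):ℝ)) s.2 (K := K₀+1)
      (by omega) hfinal
    rwa [ENNReal.ofReal_coe_nnreal] at hfin
  refine ⟨E, hEball, hdisc, hsep, hwa, hlim, le_antisymm ?_ hcritge⟩
  exact critExp_le_upperBoxDim_aux hX hXne hEball hsep hwa hlim
end Aux5




/-- **Theorem: the upper box dimension of a non-empty closed `X ⊆ S^{n-1}` is the maximum of
`δ(E)` over separated, well-approximated discrete `E ⊆ 𝔻ⁿ` with `L(E) = X`.** -/
theorem upperBoxDim_eq_max_critExp {n : ℕ} (hn : 1 ≤ n)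
    (X : Set (Pt n)) (hX : X ⊆ sphere 0 1) (hXne : X.Nonempty) (hXcl : IsClosed X) :
    (∃ E : Set (Pt n), E ⊆ ball 0 1 ∧ IsDiscreteSet E ∧ SeparatedSet E ∧
        WellApproximated E ∧ limitSet E = X ∧ critExp E = upperBoxDim X) ∧
      ∀ E : Set (Pt n), E ⊆ ball 0 1 → IsDiscreteSet E → SeparatedSet E →
        WellApproximated E → limitSet E = X → critExp E ≤ upperBoxDim X := by
  constructor
  · exact exists_good_E X hX hXne hXcl
  · intro E hE _ hsep hwa hlim
    exact critExp_le_upperBoxDim_aux hX hXne hE hsep hwa hlim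

end
end

section
/- Let n ≥ 1 and let E ⊆ 𝔻ⁿ be an arbitrary non-empty discrete set. Then the radial limit set L_rad(E) is a G_δσ set, i.e. a countable union of countable intersections of open subsets of ℝⁿ. -/
open Metric Set Filter
open scoped ENNReal NNReal

noncomputable section

/-- **Proposition: the radial limit set of a non-empty discrete set is a `G_δσ` set.** -/
theorem radialLimitSet_isGdeltaSigma {n : ℕ} (hn : 1 ≤ n)
    (E : Set (Pt n)) (hE : E ⊆ ball 0 1) (hEne : E.Nonempty) (hdisc : IsDiscreteSet E) :
    ∃ U : ℕ → ℕ → Set (Pt n), (∀ i j, IsOpen (U i j)) ∧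
      radialLimitSet E = ⋃ i, ⋂ j, U i j := by
  refine ⟨fun i j =>
    ({z : Pt n | 1 - 1/(j+1) < ‖z‖} ∩ {z : Pt n | ‖z‖ < 1 + 1/(j+1)}) ∩
      ⋃ x ∈ E, ⋃ (_ : 1 - ‖x‖ < 1/(j+1)), ball x ((i+1) * (1 - ‖x‖)), ?_, ?_⟩
  · intro i j
    refine ((isOpen_lt continuous_const continuous_norm).inter
      (isOpen_lt continuous_norm continuous_const)).inter ?_
    exact isOpen_biUnion fun x _ => isOpen_iUnion fun _ => isOpen_ball
  · ext z
    simp only [radialLimitSet, mem_iUnion, mem_iInter, mem_inter_iff, mem_setOf_eq,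
      mem_Ici]
    constructor
    · rintro ⟨c, hc, hmem⟩
      obtain ⟨hznorm, hrad⟩ := hmem
      have hc0 : (0 : ℝ) < c := lt_of_lt_of_le one_pos hc
      refine ⟨Nat.ceil c, fun j => ?_⟩
      have hj : (0 : ℝ) < 1/(j+1) := by positivity
      refine ⟨⟨by rw [hznorm]; linarith, by rw [hznorm]; linarith⟩, ?_⟩
      obtain ⟨x, hxE, hx1, hx2⟩ := hrad (1/(2*(j+1))) (by positivity)
      have hxlt : ‖x‖ < 1 := by simpa using hE hxE
      have hxr : 1 - ‖x‖ ≤ 1/(2*(j+1)) := le_of_mul_le_mul_left hx2 hc0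
      have hxr' : 1 - ‖x‖ < 1/(j+1) := by
        refine lt_of_le_of_lt hxr ?_
        rw [div_lt_div_iff₀ (by positivity) (by positivity)]
        nlinarith
      have hclt : c < (Nat.ceil c : ℝ) + 1 :=
        lt_of_le_of_lt (Nat.le_ceil c) (by linarith)
      refine ⟨x, hxE, hxr', ?_⟩
      rw [mem_ball, dist_comm]
      calc dist x z ≤ c * (1 - ‖x‖) := hx1
        _ < ((Nat.ceil c : ℝ) + 1) * (1 - ‖x‖) := by
            apply mul_lt_mul_of_pos_right hclt; linarith
    · rintro ⟨i, hU⟩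
      refine ⟨(i : ℝ) + 1, by exact_mod_cast Nat.one_le_iff_ne_zero.mpr (Nat.succ_ne_zero i), ?_, ?_⟩
      · -- ‖z‖ = 1
        have habs : ∀ ε : ℝ, 0 < ε → |‖z‖ - 1| < ε := by
          intro ε hε
          obtain ⟨j, hj⟩ := exists_nat_one_div_lt hε
          obtain ⟨⟨h1, h2⟩, _⟩ := hU j
          rw [abs_lt]
          constructor <;> [linarith; linarith]
        have : ‖z‖ - 1 = 0 := by
          by_contra h
          exact lt_irrefl _ (habs _ (abs_pos.mpr h))
        linarith
      · intro r hr
        obtain ⟨j, hj⟩ := exists_nat_one_div_lt hr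
        obtain ⟨_, x, hxE, hxr, hxball⟩ := hU j
        rw [mem_ball, dist_comm] at hxball
        have hxlt : ‖x‖ < 1 := by simpa using hE hxE
        refine ⟨x, hxE, le_of_lt hxball, ?_⟩
        have hrle : 1 - ‖x‖ ≤ r := le_of_lt (lt_trans hxr hj)
        have : (0:ℝ) < (i:ℝ) + 1 := by positivity
        nlinarith

end
end
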